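/- arXiv:1710.00456 — 4 statements merged into one kernel-verified Lean document; each statement's English description precedes it below -/
import Mathlib

section
/- Let H be a norm on ℝ^N (C¹ away from 0, with C¹ dual norm H₀). Let v be an H₀-radially symmetric C²_{H₀}-smooth function, i.e. v(x) = v♯(H₀(x)) where v*(x) := v♯(|x|) is C² on ℝ^N. Then for all x ∈ ℝ^N \ {0}, the gradient satisfies H(∇v(x))·∇_ξH(∇v(x)) = (∂_r v♯)(H₀(x)) · x / H₀(x). -/
open MeasureTheory Real InnerProductSpace

noncomputable def dualNorm {N : ℕ} (H : EuclideanSpace ℝ (Fin N) → ℝ)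
    (x : EuclideanSpace ℝ (Fin N)) : ℝ :=
  ⨆ ξ : {ξ : EuclideanSpace ℝ (Fin N) // ξ ≠ 0}, (inner ℝ x ξ.1 : ℝ) / H ξ.1


noncomputable def divg {N : ℕ}
    (F : EuclideanSpace ℝ (Fin N) → EuclideanSpace ℝ (Fin N))
    (x : EuclideanSpace ℝ (Fin N)) : ℝ :=
  ∑ i : Fin N, fderiv ℝ F x (EuclideanSpace.single i 1) i

noncomputable def finslerLap {N : ℕ} (H u : EuclideanSpace ℝ (Fin N) → ℝ)
    (x : EuclideanSpace ℝ (Fin N)) : ℝ :=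
  divg (fun y => H (gradient u y) • gradient H (gradient u y)) x

section aux
variable {N : ℕ} (H : EuclideanSpace ℝ (Fin N) → ℝ)

lemma H_subadd (hconv : ConvexOn ℝ Set.univ H)
    (hhom : ∀ (a : ℝ) ξ, H (a • ξ) = |a| * H ξ) (x y : EuclideanSpace ℝ (Fin N)) :
    H (x + y) ≤ H x + H y := by
  have h2 : H (x + y) = 2 * H ((2:ℝ)⁻¹ • (x + y)) := by
    have hxy : x + y = (2:ℝ) • ((2:ℝ)⁻¹ • (x + y)) := by
      rw [smul_smul]; norm_num
    calc H (x + y) = H ((2:ℝ) • ((2:ℝ)⁻¹ • (x + y))) := by rw [← hxy]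
      _ = |2| * H ((2:ℝ)⁻¹ • (x + y)) := hhom 2 _
      _ = 2 * H ((2:ℝ)⁻¹ • (x + y)) := by norm_num
  have := hconv.2 (Set.mem_univ x) (Set.mem_univ y) (le_of_lt one_half_pos)
    (le_of_lt one_half_pos) (by norm_num : (1:ℝ)/2 + 1/2 = 1)
  rw [h2]
  have h3 : (2:ℝ)⁻¹ • (x + y) = (1/2 : ℝ) • x + (1/2 : ℝ) • y := by
    rw [smul_add]; norm_num
  rw [h3]
  simp only [smul_eq_mul] at this
  nlinarith [this]

lemma H_bounds [Nonempty (Fin N)] (hH0 : ∀ ξ, 0 ≤ H ξ) (hHz : ∀ ξ, H ξ = 0 ↔ ξ = 0)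
    (hhom : ∀ (a : ℝ) ξ, H (a • ξ) = |a| * H ξ)
    (hC1 : ContDiffOn ℝ 1 H {ξ | ξ ≠ 0}) :
    ∃ m C : ℝ, 0 < m ∧ ∀ ξ, m * ‖ξ‖ ≤ H ξ ∧ H ξ ≤ C * ‖ξ‖ := by
  have hsph : (Metric.sphere (0 : EuclideanSpace ℝ (Fin N)) 1).Nonempty := by
    refine NormedSpace.sphere_nonempty.mpr zero_le_one
  have hcomp : IsCompact (Metric.sphere (0 : EuclideanSpace ℝ (Fin N)) 1) :=
    isCompact_sphere 0 1
  have hcontOn : ContinuousOn H (Metric.sphere (0 : EuclideanSpace ℝ (Fin N)) 1) := by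
    apply (hC1.continuousOn).mono
    intro ξ hξ
    simp only [Set.mem_setOf_eq]
    intro h; rw [h] at hξ; simp at hξ
  obtain ⟨ξm, hξm, hmin⟩ := hcomp.exists_isMinOn hsph hcontOn
  obtain ⟨ξM, hξM, hmax⟩ := hcomp.exists_isMaxOn hsph hcontOn
  refine ⟨H ξm, H ξM, ?_, ?_⟩
  · rcases (hH0 ξm).lt_or_eq with h | h
    · exact h
    · exfalso
      have := (hHz ξm).mp h.symm
      rw [this] at hξm; simp at hξm
  · intro ξ
    rcases eq_or_ne ξ 0 with rfl | hξ
    · simp [(hHz 0).mpr rfl]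
    · have hnξ : ‖ξ‖ ≠ 0 := norm_ne_zero_iff.mpr hξ
      have hmem : ‖ξ‖⁻¹ • ξ ∈ Metric.sphere (0 : EuclideanSpace ℝ (Fin N)) 1 := by
        simp [norm_smul, abs_of_nonneg (inv_nonneg.mpr (norm_nonneg ξ)),
          inv_mul_cancel₀ hnξ]
      have h1 := hmin hmem
      have h2 := hmax hmem
      simp only [Set.mem_setOf_eq] at h1 h2
      have hval : H (‖ξ‖⁻¹ • ξ) = ‖ξ‖⁻¹ * H ξ := by
        rw [hhom, abs_of_nonneg (inv_nonneg.mpr (norm_nonneg ξ))]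
      rw [hval] at h1 h2
      have hn : (0:ℝ) < ‖ξ‖ := lt_of_le_of_ne (norm_nonneg _) (Ne.symm hnξ)
      constructor
      · calc H ξm * ‖ξ‖ ≤ (‖ξ‖⁻¹ * H ξ) * ‖ξ‖ := by
              exact mul_le_mul_of_nonneg_right h1 (norm_nonneg ξ)
          _ = H ξ := by field_simp
      · calc H ξ = (‖ξ‖⁻¹ * H ξ) * ‖ξ‖ := by field_simp
          _ ≤ H ξM * ‖ξ‖ := mul_le_mul_of_nonneg_right h2 (norm_nonneg ξ)

end aux

section dn
variable {N : ℕ} {H : EuclideanSpace ℝ (Fin N) → ℝ}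

local notation "E" => EuclideanSpace ℝ (Fin N)

lemma dn_nonempty [Nonempty (Fin N)] : Nonempty {ξ : E // ξ ≠ 0} := by
  refine ⟨⟨EuclideanSpace.single (Classical.arbitrary (Fin N)) 1, ?_⟩⟩
  intro h
  have := congrArg (fun v : E => v (Classical.arbitrary (Fin N))) h
  simp [EuclideanSpace.single] at this

lemma dn_bdd (hHz : ∀ ξ, H ξ = 0 ↔ ξ = 0) {m : ℝ} (hm : 0 < m)
    (hmle : ∀ ξ, m * ‖ξ‖ ≤ H ξ) (y : E) :
    BddAbove (Set.range fun ξ : {ξ : E // ξ ≠ 0} => (inner ℝ y ξ.1 : ℝ) / H ξ.1) := by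
  refine ⟨‖y‖ / m, ?_⟩
  rintro _ ⟨ξ, rfl⟩
  have hnz : (0:ℝ) < ‖ξ.1‖ := norm_pos_iff.mpr ξ.2
  have hHpos : 0 < H ξ.1 := lt_of_lt_of_le (by positivity) (hmle ξ.1)
  rw [div_le_div_iff₀ hHpos hm]
  calc (inner ℝ y ξ.1 : ℝ) * m ≤ (‖y‖ * ‖ξ.1‖) * m := by
        exact mul_le_mul_of_nonneg_right (real_inner_le_norm y ξ.1) hm.le
    _ = ‖y‖ * (m * ‖ξ.1‖) := by ring
    _ ≤ ‖y‖ * H ξ.1 := by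
        exact mul_le_mul_of_nonneg_left (hmle ξ.1) (norm_nonneg y)

lemma dn_le (hHz : ∀ ξ, H ξ = 0 ↔ ξ = 0) {m : ℝ} (hm : 0 < m)
    (hmle : ∀ ξ, m * ‖ξ‖ ≤ H ξ) (y : E) {ξ : E} (hξ : ξ ≠ 0) :
    (inner ℝ y ξ : ℝ) / H ξ ≤ dualNorm H y :=
  le_ciSup (dn_bdd hHz hm hmle y) ⟨ξ, hξ⟩

lemma dn_le_of [Nonempty (Fin N)] {c : ℝ}
    {y : E} (h : ∀ ξ : E, ξ ≠ 0 → (inner ℝ y ξ : ℝ) / H ξ ≤ c) :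
    dualNorm H y ≤ c := by
  have : Nonempty {ξ : E // ξ ≠ 0} := dn_nonempty
  exact ciSup_le fun ξ => h ξ.1 ξ.2

lemma inner_le_dn (hHz : ∀ ξ, H ξ = 0 ↔ ξ = 0) {m : ℝ} (hm : 0 < m)
    (hmle : ∀ ξ, m * ‖ξ‖ ≤ H ξ) (y ξ : E) :
    (inner ℝ y ξ : ℝ) ≤ dualNorm H y * H ξ := by
  rcases eq_or_ne ξ 0 with rfl | hξ
  · simp [(hHz 0).mpr rfl]
  · have hHpos : 0 < H ξ := lt_of_lt_of_le (mul_pos hm (norm_pos_iff.mpr hξ)) (hmle ξ)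
    have := dn_le hHz hm hmle y hξ
    calc (inner ℝ y ξ : ℝ) = ((inner ℝ y ξ : ℝ) / H ξ) * H ξ := by field_simp
      _ ≤ dualNorm H y * H ξ := mul_le_mul_of_nonneg_right this hHpos.le

lemma dn_pos (hHz : ∀ ξ, H ξ = 0 ↔ ξ = 0) {m : ℝ} (hm : 0 < m)
    (hmle : ∀ ξ, m * ‖ξ‖ ≤ H ξ) {y : E} (hy : y ≠ 0) : 0 < dualNorm H y := by
  have hHpos : 0 < H y := lt_of_lt_of_le (mul_pos hm (norm_pos_iff.mpr hy)) (hmle y)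
  have h1 : (0:ℝ) < (inner ℝ y y : ℝ) / H y := by
    apply div_pos _ hHpos
    rw [real_inner_self_eq_norm_sq]; have := norm_pos_iff.mpr hy; positivity
  exact lt_of_lt_of_le h1 (dn_le hHz hm hmle y hy)

lemma dn_subadd (hHz : ∀ ξ, H ξ = 0 ↔ ξ = 0) {m : ℝ} (hm : 0 < m)
    (hmle : ∀ ξ, m * ‖ξ‖ ≤ H ξ) [Nonempty (Fin N)] (y z : E) :
    dualNorm H (y + z) ≤ dualNorm H y + dualNorm H z := by
  apply dn_le_of
  intro ξ hξ
  have hHpos : 0 < H ξ := lt_of_lt_of_le (mul_pos hm (norm_pos_iff.mpr hξ)) (hmle ξ)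
  rw [inner_add_left, add_div]
  exact add_le_add (dn_le hHz hm hmle y hξ) (dn_le hHz hm hmle z hξ)

lemma dn_zero [Nonempty (Fin N)] : dualNorm H (0 : E) = 0 := by
  have : Nonempty {ξ : E // ξ ≠ 0} := dn_nonempty
  unfold dualNorm
  simp [inner_zero_left]

lemma dn_smul (hHz : ∀ ξ, H ξ = 0 ↔ ξ = 0) {m : ℝ} (hm : 0 < m)
    (hmle : ∀ ξ, m * ‖ξ‖ ≤ H ξ) [Nonempty (Fin N)] {a : ℝ} (ha : 0 ≤ a) (y : E) :
    dualNorm H (a • y) = a * dualNorm H y := by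
  rcases ha.lt_or_eq with ha' | rfl
  swap
  · simp [dn_zero]
  have key : ∀ (b : ℝ), 0 < b → ∀ z : E, dualNorm H (b • z) ≤ b * dualNorm H z := by
    intro b hb z
    apply dn_le_of
    intro ξ hξ
    rw [inner_smul_left]
    simp only [RCLike.star_def, starRingEnd_apply, star_trivial]
    rw [mul_div_assoc]
    exact mul_le_mul_of_nonneg_left (dn_le hHz hm hmle z hξ) hb.le
  apply le_antisymm (key a ha' y)
  have h2 := key a⁻¹ (inv_pos.mpr ha') (a • y)
  rw [smul_smul, inv_mul_cancel₀ ha'.ne', one_smul] at h2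
  calc a * dualNorm H y ≤ a * (a⁻¹ * dualNorm H (a • y)) :=
        mul_le_mul_of_nonneg_left h2 ha'.le
    _ = dualNorm H (a • y) := by field_simp

end dn

section derivaux

lemma deriv_le_of_upper {g : ℝ → ℝ} {d c : ℝ} (hg : HasDerivAt g d 0)
    (h : ∀ t : ℝ, 0 < t → g t ≤ g 0 + t * c) : d ≤ c := by
  have hs := hasDerivAt_iff_tendsto_slope.mp hg
  have hs' : Filter.Tendsto (slope g 0) (nhdsWithin 0 (Set.Ioi 0)) (nhds d) :=
    hs.mono_left (nhdsWithin_mono 0 (fun t ht => by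
      simp only [Set.mem_compl_iff, Set.mem_singleton_iff]
      exact ne_of_gt ht))
  refine le_of_tendsto hs' ?_
  filter_upwards [self_mem_nhdsWithin] with t ht
  have ht' : (0:ℝ) < t := ht
  rw [slope_def_field]
  rw [div_le_iff₀ (by simpa using ht')]
  have := h t ht'
  simp only [sub_zero]
  linarith

lemma deriv_eq_of_eq_on_pos {g : ℝ → ℝ} {d r : ℝ} (hg : HasDerivAt g d 1)
    (h : ∀ t : ℝ, 0 < t → g t = t * r) : d = r := by
  have h2 : HasDerivAt (fun t : ℝ => t * r) r 1 := by
    simpa using (hasDerivAt_id (1:ℝ)).mul_const r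
  have h1 : g =ᶠ[nhds 1] (fun t : ℝ => t * r) := by
    filter_upwards [Ioi_mem_nhds (by norm_num : (0:ℝ) < 1)] with t ht
    exact h t ht
  exact hg.unique (h2.congr_of_eventuallyEq h1)

lemma hasDerivAt_line {E : Type*} [NormedAddCommGroup E] [NormedSpace ℝ E]
    {f : E → ℝ} {x : E} (hf : DifferentiableAt ℝ f x) (y : E) :
    HasDerivAt (fun t : ℝ => f (x + t • y)) (fderiv ℝ f x y) 0 := by
  have hline : HasDerivAt (fun t : ℝ => x + t • y) y 0 := by
    simpa using ((hasDerivAt_id (0:ℝ)).smul_const y).const_add x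
  have hf' : HasFDerivAt f (fderiv ℝ f x) (x + (0:ℝ) • y) := by
    simpa using hf.hasFDerivAt
  exact hf'.comp_hasDerivAt (0:ℝ) hline

lemma hasDerivAt_ray {E : Type*} [NormedAddCommGroup E] [NormedSpace ℝ E]
    {f : E → ℝ} {x : E} (hf : DifferentiableAt ℝ f x) :
    HasDerivAt (fun t : ℝ => f (t • x)) (fderiv ℝ f x x) 1 := by
  have hline : HasDerivAt (fun t : ℝ => t • x) x 1 := by
    simpa using (hasDerivAt_id (1:ℝ)).smul_const x
  have hf' : HasFDerivAt f (fderiv ℝ f x) ((1:ℝ) • x) := by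
    simpa using hf.hasFDerivAt
  exact hf'.comp_hasDerivAt (1:ℝ) hline

end derivaux

theorem stmt_8 {N : ℕ} (H : EuclideanSpace ℝ (Fin N) → ℝ)
    (hH0 : ∀ ξ, 0 ≤ H ξ) (hHz : ∀ ξ, H ξ = 0 ↔ ξ = 0)
    (hconv : ConvexOn ℝ Set.univ H)
    (hhom : ∀ (a : ℝ) ξ, H (a • ξ) = |a| * H ξ)
    (hC1 : ContDiffOn ℝ 1 H {ξ | ξ ≠ 0})
    (hC1dual : ContDiffOn ℝ 1 (dualNorm H) {x | x ≠ 0})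
    (vsharp : ℝ → ℝ)
    (hvstar : ContDiff ℝ 2 (fun x : EuclideanSpace ℝ (Fin N) => vsharp ‖x‖))
    (v : EuclideanSpace ℝ (Fin N) → ℝ)
    (hv : ∀ x, v x = vsharp (dualNorm H x)) :
    ∀ x : EuclideanSpace ℝ (Fin N), x ≠ 0 →
      H (gradient v x) • gradient H (gradient v x)
        = (deriv vsharp (dualNorm H x) / dualNorm H x) • x := by
  intro x hx
  -- Nonempty index type
  have hex : ∃ i, x i ≠ 0 := by
    by_contra h
    push_neg at h
    refine hx ?_
    ext i
    exact h i
  haveI : Nonempty (Fin N) := ⟨hex.choose⟩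
  -- norm bounds
  obtain ⟨m, C, hm, hbnd⟩ := H_bounds H hH0 hHz hhom hC1
  have hmle : ∀ ξ : (EuclideanSpace ℝ (Fin N)), m * ‖ξ‖ ≤ H ξ := fun ξ => (hbnd ξ).1
  have hHpos : ∀ ξ : (EuclideanSpace ℝ (Fin N)), ξ ≠ 0 → 0 < H ξ :=
    fun ξ hξ => lt_of_lt_of_le (mul_pos hm (norm_pos_iff.mpr hξ)) (hmle ξ)
  have hHsub : ∀ a b : (EuclideanSpace ℝ (Fin N)), H (a + b) ≤ H a + H b := H_subadd H hconv hhom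
  -- continuity of H
  have hHcont : Continuous H := by
    have hC0 : 0 ≤ C := by
      obtain ⟨⟨ξ, hξ⟩⟩ : Nonempty {ξ : EuclideanSpace ℝ (Fin N) // ξ ≠ 0} := dn_nonempty
      have h1 := hmle ξ
      have h2 := (hbnd ξ).2
      have h3 : (0:ℝ) < ‖ξ‖ := norm_pos_iff.mpr hξ
      nlinarith
    refine (LipschitzWith.of_dist_le_mul (K := C.toNNReal) (f := H) ?_).continuous
    intro a b
    rw [Real.dist_eq, Real.coe_toNNReal C hC0, dist_eq_norm]
    rw [abs_sub_le_iff]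
    constructor
    · have := hHsub (a - b) b
      simp only [sub_add_cancel] at this
      have h2 := (hbnd (a - b)).2
      linarith
    · have := hHsub (b - a) a
      simp only [sub_add_cancel] at this
      have h2 := (hbnd (b - a)).2
      rw [norm_sub_rev] at h2
      linarith
  -- the bidual inequality
  have hbid : ∀ ξ : (EuclideanSpace ℝ (Fin N)), (∀ y : (EuclideanSpace ℝ (Fin N)), (inner ℝ y ξ : ℝ) ≤ dualNorm H y) → H ξ ≤ 1 := by
    intro ξ hξle
    by_contra hgt
    push_neg at hgt
    have hKconv : Convex ℝ {θ : (EuclideanSpace ℝ (Fin N)) | H θ ≤ 1} := by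
      have := hconv.convex_le 1
      simpa using this
    have hKclosed : IsClosed {θ : (EuclideanSpace ℝ (Fin N)) | H θ ≤ 1} := isClosed_le hHcont continuous_const
    have hξK : ξ ∉ {θ : (EuclideanSpace ℝ (Fin N)) | H θ ≤ 1} := by simp [Set.mem_setOf_eq]; linarith
    obtain ⟨f, u, hfu, huf⟩ := geometric_hahn_banach_closed_point hKconv hKclosed hξK
    set w := (InnerProductSpace.toDual ℝ (EuclideanSpace ℝ (Fin N))).symm f with hw
    have hwz : ∀ z : (EuclideanSpace ℝ (Fin N)), (inner ℝ w z : ℝ) = f z := fun z =>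
      InnerProductSpace.toDual_symm_apply
    have hup : dualNorm H w ≤ u := by
      apply dn_le_of
      intro θ hθ
      have hHθ := hHpos θ hθ
      have hmem : (H θ)⁻¹ • θ ∈ {θ : (EuclideanSpace ℝ (Fin N)) | H θ ≤ 1} := by
        simp only [Set.mem_setOf_eq, hhom, abs_of_nonneg (inv_nonneg.mpr hHθ.le)]
        rw [inv_mul_cancel₀ hHθ.ne']
      have := hfu _ hmem
      rw [← hwz] at this
      rw [real_inner_smul_right] at this
      calc (inner ℝ w θ : ℝ) / H θ = (H θ)⁻¹ * (inner ℝ w θ : ℝ) := by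
            rw [div_eq_inv_mul]
        _ ≤ u := this.le
    have : f ξ ≤ u := by
      rw [← hwz]
      calc (inner ℝ w ξ : ℝ) ≤ dualNorm H w := hξle w
        _ ≤ u := hup
    linarith
  -- differentiability of the dual norm at x
  have hd0 : DifferentiableAt ℝ (dualNorm H) x := by
    have hopen : IsOpen {y : (EuclideanSpace ℝ (Fin N)) | y ≠ 0} := isOpen_ne
    exact (hC1dual.contDiffAt (hopen.mem_nhds hx)).differentiableAt one_ne_zero
  set ξ₀ := gradient (dualNorm H) x with hξ₀def
  have hfd : InnerProductSpace.toDual ℝ (EuclideanSpace ℝ (Fin N)) ξ₀ = fderiv ℝ (dualNorm H) x := by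
    rw [hξ₀def]
    exact LinearIsometryEquiv.apply_symm_apply _ _
  have hfd' : ∀ y : (EuclideanSpace ℝ (Fin N)), fderiv ℝ (dualNorm H) x y = (inner ℝ ξ₀ y : ℝ) := by
    intro y
    rw [← hfd]
    rfl
  have hr : 0 < dualNorm H x := dn_pos hHz hm hmle hx
  -- Euler identity
  have hE : (inner ℝ ξ₀ x : ℝ) = dualNorm H x := by
    rw [← hfd' x]
    refine deriv_eq_of_eq_on_pos (hasDerivAt_ray hd0) ?_
    intro t ht
    rw [dn_smul hHz hm hmle ht.le]
  -- subgradient inequality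
  have hSG : ∀ y : (EuclideanSpace ℝ (Fin N)), (inner ℝ ξ₀ y : ℝ) ≤ dualNorm H y := by
    intro y
    rw [← hfd' y]
    refine deriv_le_of_upper (hasDerivAt_line hd0 y) ?_
    intro t ht
    simp only [zero_smul, add_zero]
    calc dualNorm H (x + t • y) ≤ dualNorm H x + dualNorm H (t • y) :=
          dn_subadd hHz hm hmle x (t • y)
      _ = dualNorm H x + t * dualNorm H y := by rw [dn_smul hHz hm hmle ht.le]
  -- H ξ₀ = 1
  have hH1 : H ξ₀ = 1 := by
    apply le_antisymm
    · exact hbid ξ₀ (fun y => by rw [real_inner_comm]; exact hSG y)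
    · have h1 : (inner ℝ x ξ₀ : ℝ) ≤ dualNorm H x * H ξ₀ := inner_le_dn hHz hm hmle x ξ₀
      rw [real_inner_comm, hE] at h1
      nlinarith
  have hξ₀ne : ξ₀ ≠ 0 := by
    intro h
    rw [h, (hHz 0).mpr rfl] at hH1
    norm_num at hH1
  -- H is differentiable at ξ₀
  have hdH : DifferentiableAt ℝ H ξ₀ := by
    have hopen : IsOpen {y : (EuclideanSpace ℝ (Fin N)) | y ≠ 0} := isOpen_ne
    exact (hC1.contDiffAt (hopen.mem_nhds hξ₀ne)).differentiableAt one_ne_zero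
  set η := gradient H ξ₀ with hηdef
  have hfdH : InnerProductSpace.toDual ℝ (EuclideanSpace ℝ (Fin N)) η = fderiv ℝ H ξ₀ := by
    rw [hηdef]; exact LinearIsometryEquiv.apply_symm_apply _ _
  have hfdH' : ∀ y : (EuclideanSpace ℝ (Fin N)), fderiv ℝ H ξ₀ y = (inner ℝ η y : ℝ) := by
    intro y; rw [← hfdH]; rfl
  -- minimization: dualNorm H x • η = x
  have hmin : dualNorm H x • η = x := by
    set G : (EuclideanSpace ℝ (Fin N)) → ℝ := fun ξ => dualNorm H x * H ξ - (inner ℝ x ξ : ℝ) with hGdef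
    have hGmin : IsLocalMin G ξ₀ := by
      apply Filter.Eventually.of_forall
      intro ξ
      have h1 : (inner ℝ x ξ : ℝ) ≤ dualNorm H x * H ξ := inner_le_dn hHz hm hmle x ξ
      have h2 : G ξ₀ = 0 := by
        show dualNorm H x * H ξ₀ - (inner ℝ x ξ₀ : ℝ) = 0
        rw [hH1, mul_one, real_inner_comm, hE, sub_self]
      rw [h2]
      show (0:ℝ) ≤ dualNorm H x * H ξ - (inner ℝ x ξ : ℝ)
      linarith
    have hGdiff : HasFDerivAt G
        (dualNorm H x • fderiv ℝ H ξ₀ - innerSL ℝ x) ξ₀ := by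
      refine HasFDerivAt.sub ?_ ?_
      · exact hdH.hasFDerivAt.const_mul _
      · exact (innerSL ℝ x).hasFDerivAt
    have hzero : (dualNorm H x • fderiv ℝ H ξ₀ - innerSL ℝ x) = 0 := by
      rw [← hGdiff.fderiv]
      exact hGmin.fderiv_eq_zero
    have hyall : ∀ y : (EuclideanSpace ℝ (Fin N)), dualNorm H x * (inner ℝ η y : ℝ) - (inner ℝ x y : ℝ) = 0 := by
      intro y
      have := congrFun (congrArg DFunLike.coe hzero) y
      simpa [hfdH' y] using this
    have : ∀ y : (EuclideanSpace ℝ (Fin N)), (inner ℝ (dualNorm H x • η - x) y : ℝ) = 0 := by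
      intro y
      rw [inner_sub_left, real_inner_smul_left]
      exact hyall y
    have h0 := this (dualNorm H x • η - x)
    rw [inner_self_eq_zero] at h0
    exact sub_eq_zero.mp h0
  -- η = r⁻¹ • x
  have hη : η = (dualNorm H x)⁻¹ • x := by
    have h := congrArg (fun z : EuclideanSpace ℝ (Fin N) => (dualNorm H x)⁻¹ • z) hmin
    simp only [smul_smul, inv_mul_cancel₀ hr.ne', one_smul] at h
    exact h
  set r := dualNorm H x with hrdef
  have hxnorm : (0:ℝ) < ‖x‖ := norm_pos_iff.mpr hx
  set e : EuclideanSpace ℝ (Fin N) := ‖x‖⁻¹ • x with hedef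
  have he : ‖e‖ = 1 := by
    rw [hedef, norm_smul, Real.norm_eq_abs,
      abs_of_nonneg (inv_nonneg.mpr (norm_nonneg x)), inv_mul_cancel₀ hxnorm.ne']
  have hw : Differentiable ℝ (fun y : EuclideanSpace ℝ (Fin N) => vsharp ‖y‖) :=
    hvstar.differentiable (by norm_num)
  have hline : HasDerivAt (fun t : ℝ => t • e) e r := by
    simpa using (hasDerivAt_id r).smul_const e
  have hcomp : HasDerivAt (fun t : ℝ => vsharp ‖t • e‖)
      (fderiv ℝ (fun y : EuclideanSpace ℝ (Fin N) => vsharp ‖y‖) (r • e) e) r :=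
    by have h := (hw (r • e)).hasFDerivAt.comp_hasDerivAt r hline; exact h
  have hvs : HasDerivAt vsharp
      (fderiv ℝ (fun y : EuclideanSpace ℝ (Fin N) => vsharp ‖y‖) (r • e) e) r := by
    refine hcomp.congr_of_eventuallyEq ?_
    filter_upwards [Ioi_mem_nhds hr] with t ht
    rw [norm_smul, he, mul_one, Real.norm_eq_abs, abs_of_pos ht]
  have hcder : deriv vsharp r
      = fderiv ℝ (fun y : EuclideanSpace ℝ (Fin N) => vsharp ‖y‖) (r • e) e := hvs.deriv
  set c := deriv vsharp r with hcdef
  -- gradient of v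
  have hvfun : v = fun y => vsharp (dualNorm H y) := funext hv
  have hvd : HasFDerivAt v (c • fderiv ℝ (dualNorm H) x) x := by
    rw [hvfun]
    have h := hvs.comp_hasFDerivAt x hd0.hasFDerivAt
    rw [← hcder] at h
    exact h
  have hgv : gradient v x = c • ξ₀ := by
    have h1 : gradient v x
        = (InnerProductSpace.toDual ℝ (EuclideanSpace ℝ (Fin N))).symm (fderiv ℝ v x) := rfl
    rw [h1, hvd.fderiv, ← hfd]
    simp
  rw [hgv]
  rcases eq_or_ne c 0 with hc0 | hc0
  · rw [hc0, zero_smul, (hHz 0).mpr rfl, zero_smul, zero_div, zero_smul]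
  · -- c ≠ 0 case
    have hcs : c • ξ₀ ≠ 0 := smul_ne_zero hc0 hξ₀ne
    have hHeq : ∀ y : EuclideanSpace ℝ (Fin N), H y = |c| * H (c⁻¹ • y) := by
      intro y
      rw [hhom, abs_inv, ← mul_assoc, mul_inv_cancel₀ (abs_ne_zero.mpr hc0), one_mul]
    have hidmap : HasFDerivAt (fun y : EuclideanSpace ℝ (Fin N) => c⁻¹ • y)
        (c⁻¹ • ContinuousLinearMap.id ℝ (EuclideanSpace ℝ (Fin N))) (c • ξ₀) :=
      (c⁻¹ • ContinuousLinearMap.id ℝ (EuclideanSpace ℝ (Fin N))).hasFDerivAt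
    have hHat : HasFDerivAt H (fderiv ℝ H ξ₀)
        ((fun y : EuclideanSpace ℝ (Fin N) => c⁻¹ • y) (c • ξ₀)) := by
      have hpt : (fun y : EuclideanSpace ℝ (Fin N) => c⁻¹ • y) (c • ξ₀) = ξ₀ := by
        simp [smul_smul, inv_mul_cancel₀ hc0]
      rw [hpt]
      exact hdH.hasFDerivAt
    have h1 : HasFDerivAt (fun y : EuclideanSpace ℝ (Fin N) => H (c⁻¹ • y))
        ((fderiv ℝ H ξ₀).comp (c⁻¹ • ContinuousLinearMap.id ℝ (EuclideanSpace ℝ (Fin N))))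
        (c • ξ₀) := hHat.comp (c • ξ₀) hidmap
    have h2 : HasFDerivAt H ((|c| * c⁻¹) • fderiv ℝ H ξ₀) (c • ξ₀) := by
      have h3 := h1.const_mul |c|
      have h4 : H =ᶠ[nhds (c • ξ₀)] fun y => |c| * H (c⁻¹ • y) :=
        Filter.Eventually.of_forall hHeq
      have h5 := h3.congr_of_eventuallyEq h4
      have h6 : |c| • ((fderiv ℝ H ξ₀).comp
          (c⁻¹ • ContinuousLinearMap.id ℝ (EuclideanSpace ℝ (Fin N))))
          = (|c| * c⁻¹) • fderiv ℝ H ξ₀ := by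
        ext y
        simp [mul_comm, mul_assoc, mul_left_comm]
      rwa [h6] at h5
    have hgHc : gradient H (c • ξ₀) = (|c| * c⁻¹) • η := by
      have h1' : gradient H (c • ξ₀)
          = (InnerProductSpace.toDual ℝ (EuclideanSpace ℝ (Fin N))).symm
              (fderiv ℝ H (c • ξ₀)) := rfl
      rw [h1', h2.fderiv, ← hfdH]
      simp
    have hHval : H (c • ξ₀) = |c| := by rw [hhom, hH1, mul_one]
    rw [hgHc, hHval, hη, smul_smul, smul_smul]
    congr 1
    rw [div_eq_mul_inv]
    have : |c| * (|c| * c⁻¹) = c := by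
      rw [← mul_assoc, abs_mul_abs_self]
      field_simp
    rw [this]
end

section
/- Let H be a norm on ℝ^N with strictly convex unit ball and C¹ away from 0, and H₀ its dual norm. If v and w are H₀-radially symmetric C²_{H₀}-smooth functions, then for any α, β ∈ ℝ, Δ_H(αv + βw) = αΔ_H v + βΔ_H w in ℝ^N, i.e. the (generally nonlinear) Finsler-Laplace operator acts linearly on H₀-radially symmetric smooth functions. -/
open MeasureTheory Real

structure GoodNorm {N : ℕ} (H : EuclideanSpace ℝ (Fin N) → ℝ) : Prop where
  nonneg : ∀ ξ, 0 ≤ H ξ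
  zero_iff : ∀ ξ, H ξ = 0 ↔ ξ = 0
  conv : ConvexOn ℝ Set.univ H
  hom : ∀ (a : ℝ) ξ, H (a • ξ) = |a| * H ξ
  c1 : ContDiffOn ℝ 1 H {ξ | ξ ≠ 0}
  Npos : 0 < N

namespace GoodNorm

variable {N : ℕ} {H : EuclideanSpace ℝ (Fin N) → ℝ} (hg : GoodNorm H)
include hg

lemma pos {ξ : EuclideanSpace ℝ (Fin N)} (hξ : ξ ≠ 0) : 0 < H ξ :=
  lt_of_le_of_ne (hg.nonneg ξ) (fun h => hξ ((hg.zero_iff ξ).mp h.symm))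

lemma zero : H 0 = 0 := (hg.zero_iff 0).mpr rfl

lemma cont : Continuous H :=
  continuousOn_univ.mp (hg.conv.continuousOn isOpen_univ)

lemma exists_lower : ∃ m : ℝ, 0 < m ∧ ∀ ξ : EuclideanSpace ℝ (Fin N), m * ‖ξ‖ ≤ H ξ := by
  have hne : (Metric.sphere (0 : EuclideanSpace ℝ (Fin N)) 1).Nonempty := by
    refine ⟨EuclideanSpace.single ⟨0, hg.Npos⟩ (1:ℝ), ?_⟩
    simp [EuclideanSpace.norm_single]
  obtain ⟨ξ₀, hmem, hmin⟩ :=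
    (isCompact_sphere (0:EuclideanSpace ℝ (Fin N)) 1).exists_isMinOn hne hg.cont.continuousOn
  have hξ₀ : ξ₀ ≠ 0 := by
    intro h
    rw [Metric.mem_sphere, dist_zero_right] at hmem
    rw [h] at hmem; simp at hmem
  refine ⟨H ξ₀, hg.pos hξ₀, fun ξ => ?_⟩
  rcases eq_or_ne ξ 0 with rfl | hξ
  · simp [hg.zero]
  · have hn : ‖ξ‖ ≠ 0 := norm_ne_zero_iff.mpr hξ
    have hmem' : ‖ξ‖⁻¹ • ξ ∈ Metric.sphere (0:EuclideanSpace ℝ (Fin N)) 1 := by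
      simp [norm_smul, abs_of_nonneg (inv_nonneg.mpr (norm_nonneg ξ)), inv_mul_cancel₀ hn]
    have h1 := hmin hmem'
    have hcalc : H ξ = ‖ξ‖ * H (‖ξ‖⁻¹ • ξ) := by
      have := hg.hom ‖ξ‖ (‖ξ‖⁻¹ • ξ)
      rw [smul_smul, mul_inv_cancel₀ hn, one_smul, abs_of_nonneg (norm_nonneg ξ)] at this
      exact this
    rw [hcalc]
    calc H ξ₀ * ‖ξ‖ ≤ H (‖ξ‖⁻¹ • ξ) * ‖ξ‖ := mul_le_mul_of_nonneg_right h1 (norm_nonneg ξ)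
      _ = ‖ξ‖ * H (‖ξ‖⁻¹ • ξ) := mul_comm _ _

lemma nonempty_sub : Nonempty {ξ : EuclideanSpace ℝ (Fin N) // ξ ≠ 0} := by
  refine ⟨⟨EuclideanSpace.single ⟨0, hg.Npos⟩ (1:ℝ), ?_⟩⟩
  intro h
  have := congrArg norm h
  simp [EuclideanSpace.norm_single] at this

lemma ratio_le {m : ℝ} (hm0 : 0 < m) (hm : ∀ ξ, m * ‖ξ‖ ≤ H ξ)
    (x : EuclideanSpace ℝ (Fin N)) {ξ : EuclideanSpace ℝ (Fin N)} (hξ : ξ ≠ 0) :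
    (inner ℝ x ξ : ℝ) / H ξ ≤ ‖x‖ / m := by
  have hHξ : 0 < H ξ := hg.pos hξ
  rcases le_or_gt (inner ℝ x ξ : ℝ) 0 with h | h
  · exact le_trans (div_nonpos_iff.mpr (Or.inr ⟨h, hHξ.le⟩)) (div_nonneg (norm_nonneg x) hm0.le)
  · have h1 : (inner ℝ x ξ : ℝ) ≤ ‖x‖ * ‖ξ‖ := real_inner_le_norm x ξ
    have h2 : (inner ℝ x ξ : ℝ) / H ξ ≤ (inner ℝ x ξ : ℝ) / (m * ‖ξ‖) := by
      apply div_le_div_of_nonneg_left h.le _ (hm ξ)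
      exact mul_pos hm0 (norm_pos_iff.mpr hξ)
    refine h2.trans ?_
    rw [div_le_div_iff₀ (mul_pos hm0 (norm_pos_iff.mpr hξ)) hm0]
    calc (inner ℝ x ξ : ℝ) * m ≤ (‖x‖ * ‖ξ‖) * m := mul_le_mul_of_nonneg_right h1 hm0.le
      _ = ‖x‖ * (m * ‖ξ‖) := by ring

lemma bddA (x : EuclideanSpace ℝ (Fin N)) :
    BddAbove (Set.range fun ξ : {ξ : EuclideanSpace ℝ (Fin N) // ξ ≠ 0} =>
      (inner ℝ x ξ.1 : ℝ) / H ξ.1) := by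
  obtain ⟨m, hm0, hm⟩ := hg.exists_lower
  refine ⟨‖x‖ / m, ?_⟩
  rintro r ⟨⟨ξ, hξ⟩, rfl⟩
  exact hg.ratio_le hm0 hm x hξ

lemma le_dual (x ξ : EuclideanSpace ℝ (Fin N)) (hξ : ξ ≠ 0) :
    (inner ℝ x ξ : ℝ) / H ξ ≤ dualNorm H x :=
  le_ciSup (hg.bddA x) ⟨ξ, hξ⟩

lemma dual_pos {x : EuclideanSpace ℝ (Fin N)} (hx : x ≠ 0) : 0 < dualNorm H x := by
  have h2 := hg.le_dual x x hx
  have h1 : 0 < (inner ℝ x x : ℝ) / H x := by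
    apply div_pos _ (hg.pos hx)
    rw [real_inner_self_eq_norm_mul_norm]
    exact mul_pos (norm_pos_iff.mpr hx) (norm_pos_iff.mpr hx)
  linarith

lemma dual_nonneg (x : EuclideanSpace ℝ (Fin N)) : 0 ≤ dualNorm H x := by
  rcases eq_or_ne x 0 with rfl | hx
  · haveI := hg.nonempty_sub
    have : dualNorm H (0 : EuclideanSpace ℝ (Fin N)) = 0 := by
      unfold dualNorm
      have : ∀ ξ : {ξ : EuclideanSpace ℝ (Fin N) // ξ ≠ 0},
          (inner ℝ (0 : EuclideanSpace ℝ (Fin N)) ξ.1 : ℝ) / H ξ.1 = 0 := by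
        intro ξ; simp
      rw [iSup_congr this]
      exact ciSup_const
    linarith [this]
  · exact (hg.dual_pos hx).le

lemma dual_zero : dualNorm H (0 : EuclideanSpace ℝ (Fin N)) = 0 := by
  haveI := hg.nonempty_sub
  unfold dualNorm
  have : ∀ ξ : {ξ : EuclideanSpace ℝ (Fin N) // ξ ≠ 0},
      (inner ℝ (0 : EuclideanSpace ℝ (Fin N)) ξ.1 : ℝ) / H ξ.1 = 0 := by
    intro ξ; simp
  rw [iSup_congr this]
  exact ciSup_const

lemma inner_le_dual_mul (x ξ : EuclideanSpace ℝ (Fin N)) :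
    (inner ℝ x ξ : ℝ) ≤ dualNorm H x * H ξ := by
  rcases eq_or_ne ξ 0 with rfl | hξ
  · simp [hg.zero]
  · have := hg.le_dual x ξ hξ
    rwa [div_le_iff₀ (hg.pos hξ)] at this

lemma dual_upper {m : ℝ} (hm0 : 0 < m) (hm : ∀ ξ, m * ‖ξ‖ ≤ H ξ)
    (x : EuclideanSpace ℝ (Fin N)) : dualNorm H x ≤ ‖x‖ / m := by
  haveI := hg.nonempty_sub
  exact ciSup_le fun ⟨ξ, hξ⟩ => hg.ratio_le hm0 hm x hξ

lemma exists_max {x : EuclideanSpace ℝ (Fin N)} (hx : x ≠ 0) :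
    ∃ ξ : EuclideanSpace ℝ (Fin N), ξ ≠ 0 ∧ dualNorm H x = (inner ℝ x ξ : ℝ) / H ξ := by
  have hne : (Metric.sphere (0 : EuclideanSpace ℝ (Fin N)) 1).Nonempty := by
    refine ⟨EuclideanSpace.single ⟨0, hg.Npos⟩ (1:ℝ), ?_⟩
    simp [EuclideanSpace.norm_single]
  have hfc : ContinuousOn (fun ξ : EuclideanSpace ℝ (Fin N) => (inner ℝ x ξ : ℝ) / H ξ)
      (Metric.sphere (0 : EuclideanSpace ℝ (Fin N)) 1) := by
    apply ContinuousOn.div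
    · exact (Continuous.inner continuous_const continuous_id).continuousOn
    · exact hg.cont.continuousOn
    · intro ξ hξ
      have : ξ ≠ 0 := by
        intro h; rw [Metric.mem_sphere, dist_zero_right, h] at hξ; simp at hξ
      exact (hg.pos this).ne'
  obtain ⟨ξb, hmem, hmax⟩ :=
    (isCompact_sphere (0 : EuclideanSpace ℝ (Fin N)) 1).exists_isMaxOn hne hfc
  have hξb : ξb ≠ 0 := by
    intro h; rw [Metric.mem_sphere, dist_zero_right, h] at hmem; simp at hmem
  refine ⟨ξb, hξb, le_antisymm ?_ (hg.le_dual x ξb hξb)⟩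
  haveI := hg.nonempty_sub
  apply ciSup_le
  rintro ⟨ξ, hξ⟩
  have hn : ‖ξ‖ ≠ 0 := norm_ne_zero_iff.mpr hξ
  have hmem' : ‖ξ‖⁻¹ • ξ ∈ Metric.sphere (0 : EuclideanSpace ℝ (Fin N)) 1 := by
    simp [norm_smul, abs_of_nonneg (inv_nonneg.mpr (norm_nonneg ξ)), inv_mul_cancel₀ hn]
  have heq : (inner ℝ x ξ : ℝ) / H ξ = (inner ℝ x (‖ξ‖⁻¹ • ξ) : ℝ) / H (‖ξ‖⁻¹ • ξ) := by
    rw [real_inner_smul_right, hg.hom, abs_of_nonneg (inv_nonneg.mpr (norm_nonneg ξ))]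
    rw [mul_div_mul_left _ _ (inv_ne_zero hn)]
  rw [heq]
  exact hmax hmem'

open InnerProductSpace in
lemma dual_grad (hc1dual : ContDiffOn ℝ 1 (dualNorm H) {y | y ≠ 0})
    {x : EuclideanSpace ℝ (Fin N)} (hx : x ≠ 0) :
    ∃ η : EuclideanSpace ℝ (Fin N), HasGradientAt (dualNorm H) η x ∧ H η = 1 ∧
      (inner ℝ x η : ℝ) = dualNorm H x := by
  obtain ⟨ξb, hξb, hmax⟩ := hg.exists_max hx
  have hHξb : 0 < H ξb := hg.pos hξb
  set η : EuclideanSpace ℝ (Fin N) := (H ξb)⁻¹ • ξb with hηdef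
  have hη1 : H η = 1 := by
    rw [hηdef, hg.hom, abs_of_nonneg (inv_nonneg.mpr hHξb.le), inv_mul_cancel₀ hHξb.ne']
  have hηinner : (inner ℝ x η : ℝ) = dualNorm H x := by
    rw [hηdef, real_inner_smul_right, hmax, div_eq_inv_mul]
  refine ⟨η, ?_, hη1, hηinner⟩
  have hdiff : DifferentiableAt ℝ (dualNorm H) x :=
    (hc1dual.differentiableOn one_ne_zero).differentiableAt (isOpen_ne.mem_nhds hx)
  set L : EuclideanSpace ℝ (Fin N) →L[ℝ] ℝ := toDual ℝ (EuclideanSpace ℝ (Fin N)) η with hLdef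
  have hgL : HasFDerivAt (fun y => (inner ℝ y η : ℝ)) L x := by
    have : (fun y : EuclideanSpace ℝ (Fin N) => (inner ℝ y η : ℝ)) = fun y => L y := by
      funext y
      rw [hLdef, toDual_apply_apply, real_inner_comm]
    rw [this]
    exact L.hasFDerivAt
  have hle : ∀ y, (inner ℝ y η : ℝ) ≤ dualNorm H y := by
    intro y
    have := hg.le_dual y ξb hξb
    rwa [hηdef, real_inner_smul_right, ← div_eq_inv_mul]
  have hmin : IsLocalMin (fun y => dualNorm H y - (inner ℝ y η : ℝ)) x := by
    apply Filter.Eventually.of_forall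
    intro y
    simp only
    have h1 := hle y
    have h2 : dualNorm H x - (inner ℝ x η : ℝ) = 0 := by rw [hηinner]; ring
    rw [h2]
    linarith
  have hfz := hmin.fderiv_eq_zero
  have hsub : fderiv ℝ (fun y => dualNorm H y - (inner ℝ y η : ℝ)) x
      = fderiv ℝ (dualNorm H) x - L := by
    rw [fderiv_fun_sub hdiff hgL.differentiableAt, hgL.fderiv]
  have hρL : fderiv ℝ (dualNorm H) x = L := by
    rw [hsub] at hfz
    have := sub_eq_zero.mp hfz
    exact this
  have : HasFDerivAt (dualNorm H) L x := by
    rw [← hρL]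
    exact hdiff.hasFDerivAt
  exact hasGradientAt_iff_hasFDerivAt.mpr this

open InnerProductSpace in
lemma grad_H (hc1dual : ContDiffOn ℝ 1 (dualNorm H) {y | y ≠ 0})
    {x η : EuclideanSpace ℝ (Fin N)} (hx : x ≠ 0) (hη1 : H η = 1)
    (hηinner : (inner ℝ x η : ℝ) = dualNorm H x) :
    HasGradientAt H ((dualNorm H x)⁻¹ • x) η := by
  have hη0 : η ≠ 0 := by
    intro h
    rw [h, hg.zero] at hη1
    norm_num at hη1
  have hρ : 0 < dualNorm H x := hg.dual_pos hx
  have hdiffH : DifferentiableAt ℝ H η :=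
    (hg.c1.differentiableOn one_ne_zero).differentiableAt (isOpen_ne.mem_nhds hη0)
  set L : EuclideanSpace ℝ (Fin N) →L[ℝ] ℝ :=
    toDual ℝ (EuclideanSpace ℝ (Fin N)) x with hLdef
  have hgL : HasFDerivAt (fun ξ => (inner ℝ x ξ : ℝ)) L η := by
    have : (fun ξ : EuclideanSpace ℝ (Fin N) => (inner ℝ x ξ : ℝ)) = fun ξ => L ξ := by
      funext ξ
      rw [hLdef, toDual_apply_apply]
    rw [this]
    exact L.hasFDerivAt
  have hmax : IsLocalMax (fun ξ => (inner ℝ x ξ : ℝ) - dualNorm H x * H ξ) η := by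
    apply Filter.Eventually.of_forall
    intro ξ
    simp only
    have h1 := hg.inner_le_dual_mul x ξ
    have h2 : (inner ℝ x η : ℝ) - dualNorm H x * H η = 0 := by rw [hηinner, hη1]; ring
    rw [h2]
    linarith
  have hfz := hmax.fderiv_eq_zero
  have hdiff2 : DifferentiableAt ℝ (fun ξ => dualNorm H x * H ξ) η :=
    hdiffH.const_mul _
  have hsub : fderiv ℝ (fun ξ => (inner ℝ x ξ : ℝ) - dualNorm H x * H ξ) η
      = L - dualNorm H x • fderiv ℝ H η := by
    rw [fderiv_fun_sub hgL.differentiableAt hdiff2, hgL.fderiv, fderiv_const_mul hdiffH]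
  rw [hsub] at hfz
  have hfH : fderiv ℝ H η = (dualNorm H x)⁻¹ • L := by
    have h3 : L = dualNorm H x • fderiv ℝ H η := by
      have := sub_eq_zero.mp hfz
      exact this
    rw [h3, smul_smul, inv_mul_cancel₀ hρ.ne', one_smul]
  have hfd : HasFDerivAt H ((dualNorm H x)⁻¹ • L) η := by
    rw [← hfH]
    exact hdiffH.hasFDerivAt
  apply hasGradientAt_iff_hasFDerivAt.mpr
  have : toDual ℝ (EuclideanSpace ℝ (Fin N)) ((dualNorm H x)⁻¹ • x)
      = (dualNorm H x)⁻¹ • L := by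
    ext y
    simp [hLdef, toDual_apply_apply, real_inner_smul_left]
  rw [this]
  exact hfd

open InnerProductSpace in
lemma field_id (hc1dual : ContDiffOn ℝ 1 (dualNorm H) {y | y ≠ 0})
    {x : EuclideanSpace ℝ (Fin N)} (hx : x ≠ 0) (s : ℝ) :
    H (s • gradient (dualNorm H) x) • gradient H (s • gradient (dualNorm H) x)
      = (s / dualNorm H x) • x := by
  obtain ⟨η, hηgrad, hη1, hηinner⟩ := hg.dual_grad hc1dual hx
  have hgradρ : gradient (dualNorm H) x = η := hηgrad.gradient
  have hρ : 0 < dualNorm H x := hg.dual_pos hx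
  rw [hgradρ]
  rcases eq_or_ne s 0 with rfl | hs
  · rw [zero_smul, hg.zero, zero_smul, zero_div, zero_smul]
  · have hη0 : η ≠ 0 := by
      intro h
      rw [h, hg.zero] at hη1
      norm_num at hη1
    have hsη0 : s • η ≠ 0 := smul_ne_zero hs hη0
    have hGη : HasGradientAt H ((dualNorm H x)⁻¹ • x) η := hg.grad_H hc1dual hx hη1 hηinner
    have hdiffH : DifferentiableAt ℝ H (s • η) :=
      (hg.c1.differentiableOn one_ne_zero).differentiableAt (isOpen_ne.mem_nhds hsη0)
    set L' : EuclideanSpace ℝ (Fin N) →L[ℝ] ℝ := fderiv ℝ H (s • η) with hL'def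
    have hL' : HasFDerivAt H L' (s • η) := hdiffH.hasFDerivAt
    have hsm : HasFDerivAt (fun ξ : EuclideanSpace ℝ (Fin N) => s • ξ)
        (s • ContinuousLinearMap.id ℝ (EuclideanSpace ℝ (Fin N))) η :=
      (hasFDerivAt_id η).const_smul s
    have hcomp : HasFDerivAt (fun ξ : EuclideanSpace ℝ (Fin N) => H (s • ξ))
        (L'.comp (s • ContinuousLinearMap.id ℝ (EuclideanSpace ℝ (Fin N)))) η :=
      hL'.comp η hsm
    have habs : HasFDerivAt (fun ξ : EuclideanSpace ℝ (Fin N) => H (s • ξ))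
        (|s| • toDual ℝ (EuclideanSpace ℝ (Fin N)) ((dualNorm H x)⁻¹ • x)) η := by
      have heq : (fun ξ : EuclideanSpace ℝ (Fin N) => H (s • ξ))
          = fun ξ => |s| * H ξ := by
        funext ξ; exact hg.hom s ξ
      rw [heq]
      exact hGη.hasFDerivAt.const_mul |s|
    have huniq := hcomp.unique habs
    have hcompeq : L'.comp (s • ContinuousLinearMap.id ℝ (EuclideanSpace ℝ (Fin N)))
        = s • L' := by
      ext y
      simp
    rw [hcompeq] at huniq
    have hL'eq : L' = (|s| / s) • toDual ℝ (EuclideanSpace ℝ (Fin N)) ((dualNorm H x)⁻¹ • x) := by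
      have h2 : s⁻¹ • (s • L') = s⁻¹ • (|s| • toDual ℝ (EuclideanSpace ℝ (Fin N)) ((dualNorm H x)⁻¹ • x)) := by
        rw [huniq]
      rw [smul_smul, smul_smul, inv_mul_cancel₀ hs, one_smul] at h2
      rw [h2, div_eq_inv_mul]
    have hGsη : HasGradientAt H ((|s| / s) • ((dualNorm H x)⁻¹ • x)) (s • η) := by
      apply hasGradientAt_iff_hasFDerivAt.mpr
      have : toDual ℝ (EuclideanSpace ℝ (Fin N)) ((|s| / s) • ((dualNorm H x)⁻¹ • x))
          = (|s| / s) • toDual ℝ (EuclideanSpace ℝ (Fin N)) ((dualNorm H x)⁻¹ • x) := by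
        ext y
        simp [toDual_apply_apply, real_inner_smul_left]
      rw [this, ← hL'eq]
      exact hL'
    rw [hGsη.gradient, hg.hom s η, hη1, mul_one]
    rw [smul_smul, smul_smul]
    congr 1
    field_simp
    exact sq_abs s

open InnerProductSpace in
lemma chain (hc1dual : ContDiffOn ℝ 1 (dualNorm H) {y | y ≠ 0})
    {x : EuclideanSpace ℝ (Fin N)} (hx : x ≠ 0) {φ : ℝ → ℝ} {d : ℝ}
    (hφ : HasDerivAt φ d (dualNorm H x)) :
    HasGradientAt (fun y => φ (dualNorm H y)) (d • gradient (dualNorm H) x) x := by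
  have hdiff : DifferentiableAt ℝ (dualNorm H) x :=
    (hc1dual.differentiableOn one_ne_zero).differentiableAt (isOpen_ne.mem_nhds hx)
  have hρfd : HasFDerivAt (dualNorm H)
      (toDual ℝ (EuclideanSpace ℝ (Fin N)) (gradient (dualNorm H) x)) x :=
    hdiff.hasGradientAt.hasFDerivAt
  have hcomp := hφ.comp_hasFDerivAt x hρfd
  apply hasGradientAt_iff_hasFDerivAt.mpr
  have : toDual ℝ (EuclideanSpace ℝ (Fin N)) (d • gradient (dualNorm H) x)
      = d • toDual ℝ (EuclideanSpace ℝ (Fin N)) (gradient (dualNorm H) x) := by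
    ext y
    simp [toDual_apply_apply, real_inner_smul_left]
  rw [this]
  exact hcomp

lemma field_formula (hc1dual : ContDiffOn ℝ 1 (dualNorm H) {y | y ≠ 0})
    {x : EuclideanSpace ℝ (Fin N)} (hx : x ≠ 0) {φ : ℝ → ℝ} {d : ℝ}
    (hφ : HasDerivAt φ d (dualNorm H x)) :
    H (gradient (fun y => φ (dualNorm H y)) x) •
      gradient H (gradient (fun y => φ (dualNorm H y)) x)
      = (d / dualNorm H x) • x := by
  rw [(hg.chain hc1dual hx hφ).gradient]
  exact hg.field_id hc1dual hx d

end GoodNorm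

lemma divg_congr {N : ℕ} {F G : EuclideanSpace ℝ (Fin N) → EuclideanSpace ℝ (Fin N)}
    {x : EuclideanSpace ℝ (Fin N)} (h : F =ᶠ[nhds x] G) : divg F x = divg G x := by
  unfold divg
  rw [Filter.EventuallyEq.fderiv_eq h]

lemma even_deriv_zero {h : ℝ → ℝ} (hd : Differentiable ℝ h) (he : ∀ t, h (-t) = h t) :
    deriv h 0 = 0 := by
  have h1 : HasDerivAt h (deriv h 0) 0 := (hd 0).hasDerivAt
  have h1' : HasDerivAt h (deriv h 0) (-0 : ℝ) := by rw [neg_zero]; exact h1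
  have hneg : HasDerivAt (fun t : ℝ => h (-t)) (deriv h 0 * (-1)) 0 :=
    HasDerivAt.comp 0 h1' (hasDerivAt_neg 0)
  have heq : (fun t : ℝ => h (-t)) = h := funext he
  rw [heq] at hneg
  have := h1.unique hneg
  linarith

namespace GoodNorm
variable {N : ℕ} {H : EuclideanSpace ℝ (Fin N) → ℝ} (hg : GoodNorm H)
include hg

lemma rfield_eventually (hc1dual : ContDiffOn ℝ 1 (dualNorm H) {y | y ≠ 0})
    {φ : ℝ → ℝ} (hφ : Differentiable ℝ φ) {x : EuclideanSpace ℝ (Fin N)} (hx : x ≠ 0) :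
    (fun y => H (gradient (fun z => φ (dualNorm H z)) y) •
        gradient H (gradient (fun z => φ (dualNorm H z)) y))
      =ᶠ[nhds x] fun y => (deriv φ (dualNorm H y) / dualNorm H y) • y := by
  filter_upwards [isOpen_ne.mem_nhds hx] with y hy
  exact hg.field_formula hc1dual hy (hφ (dualNorm H y)).hasDerivAt

lemma coeff_diff (hc1dual : ContDiffOn ℝ 1 (dualNorm H) {y | y ≠ 0})
    {ψ : ℝ → ℝ} (hψ : Differentiable ℝ ψ) {x : EuclideanSpace ℝ (Fin N)} (hx : x ≠ 0) :
    DifferentiableAt ℝ (fun y => (ψ (dualNorm H y) / dualNorm H y) • y) x := by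
  have hρd : DifferentiableAt ℝ (dualNorm H) x :=
    (hc1dual.differentiableOn one_ne_zero).differentiableAt (isOpen_ne.mem_nhds hx)
  have h0 : DifferentiableAt ℝ (fun y => ψ (dualNorm H y)) x :=
    DifferentiableAt.comp x (hψ (dualNorm H x)) hρd
  have h1 : DifferentiableAt ℝ (fun y => ψ (dualNorm H y) / dualNorm H y) x := by
    simp only [div_eq_mul_inv]
    exact h0.mul (hρd.inv (hg.dual_pos hx).ne')
  exact h1.smul differentiableAt_fun_id

lemma main_ne (hc1dual : ContDiffOn ℝ 1 (dualNorm H) {y | y ≠ 0})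
    {hv hw : ℝ → ℝ} (hvD : Differentiable ℝ hv) (hwD : Differentiable ℝ hw)
    (hvD' : Differentiable ℝ (deriv hv)) (hwD' : Differentiable ℝ (deriv hw))
    (α β : ℝ) {x : EuclideanSpace ℝ (Fin N)} (hx : x ≠ 0) :
    divg (fun y => H (gradient (fun z => α * hv (dualNorm H z) + β * hw (dualNorm H z)) y) •
        gradient H (gradient (fun z => α * hv (dualNorm H z) + β * hw (dualNorm H z)) y)) x
      = α * divg (fun y => H (gradient (fun z => hv (dualNorm H z)) y) •
          gradient H (gradient (fun z => hv (dualNorm H z)) y)) x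
        + β * divg (fun y => H (gradient (fun z => hw (dualNorm H z)) y) •
            gradient H (gradient (fun z => hw (dualNorm H z)) y)) x := by
  have hcD : Differentiable ℝ (fun t => α * hv t + β * hw t) :=
    ((hvD.const_mul α).add (hwD.const_mul β))
  have ec := hg.rfield_eventually hc1dual hcD hx
  have ev := hg.rfield_eventually hc1dual hvD hx
  have ew := hg.rfield_eventually hc1dual hwD hx
  have hdc : ∀ t, deriv (fun t => α * hv t + β * hw t) t = α * deriv hv t + β * deriv hw t := by
    intro t
    rw [deriv_fun_add ((hvD t).const_mul α) ((hwD t).const_mul β),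
      deriv_const_mul α (hvD t), deriv_const_mul β (hwD t)]
  have hGc : (fun y => (deriv (fun t => α * hv t + β * hw t) (dualNorm H y) / dualNorm H y) • y)
      = fun y : EuclideanSpace ℝ (Fin N) =>
          α • ((deriv hv (dualNorm H y) / dualNorm H y) • y)
          + β • ((deriv hw (dualNorm H y) / dualNorm H y) • y) := by
    funext y
    rw [hdc, smul_smul, smul_smul, ← add_smul]
    congr 1
    rw [add_div, mul_div_assoc, mul_div_assoc]
  have Dv := hg.coeff_diff hc1dual hvD' hx
  have Dw := hg.coeff_diff hc1dual hwD' hx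
  rw [divg_congr ec, divg_congr ev, divg_congr ew, hGc]
  have hf : fderiv ℝ (fun y : EuclideanSpace ℝ (Fin N) =>
        α • ((deriv hv (dualNorm H y) / dualNorm H y) • y)
        + β • ((deriv hw (dualNorm H y) / dualNorm H y) • y)) x
      = α • fderiv ℝ (fun y => (deriv hv (dualNorm H y) / dualNorm H y) • y) x
        + β • fderiv ℝ (fun y => (deriv hw (dualNorm H y) / dualNorm H y) • y) x := by
    rw [fderiv_fun_add (Dv.fun_const_smul α) (Dw.fun_const_smul β),
      fderiv_fun_const_smul Dv α, fderiv_fun_const_smul Dw β]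
  unfold divg
  rw [hf]
  simp only [ContinuousLinearMap.add_apply, ContinuousLinearMap.coe_smul', Pi.smul_apply,
    PiLp.add_apply, PiLp.smul_apply, smul_eq_mul]
  rw [Finset.sum_add_distrib, Finset.mul_sum, Finset.mul_sum]

open InnerProductSpace in
lemma grad_zero_at_zero {φ : ℝ → ℝ} (hd : Differentiable ℝ φ)
    (hdc : Continuous (deriv φ)) (hφ0 : deriv φ 0 = 0) :
    HasGradientAt (fun y => φ (dualNorm H y)) 0 (0 : EuclideanSpace ℝ (Fin N)) := by
  obtain ⟨m, hm0, hm⟩ := hg.exists_lower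
  have hupper : ∀ y : EuclideanSpace ℝ (Fin N), dualNorm H y ≤ ‖y‖ / m :=
    fun y => hg.dual_upper hm0 hm y
  apply hasGradientAt_iff_hasFDerivAt.mpr
  have hz : toDual ℝ (EuclideanSpace ℝ (Fin N)) (0 : EuclideanSpace ℝ (Fin N)) = 0 :=
    map_zero _
  rw [hz]
  rw [hasFDerivAt_iff_isLittleO_nhds_zero]
  rw [Asymptotics.isLittleO_iff]
  intro c hc
  have hcm : 0 < c * m := mul_pos hc hm0
  obtain ⟨δ, hδ0, hδ⟩ := Metric.continuousAt_iff.mp (hdc.continuousAt (x := 0)) (c * m) hcm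
  have hball : ∀ t ∈ Metric.ball (0:ℝ) δ, ‖deriv φ t‖ ≤ c * m := by
    intro t ht
    have := hδ (by simpa [Real.dist_eq] using ht)
    rw [Real.dist_eq, hφ0, sub_zero] at this
    exact le_of_lt (by simpa [Real.norm_eq_abs] using this)
  filter_upwards [Metric.ball_mem_nhds (0 : EuclideanSpace ℝ (Fin N))
    (show (0:ℝ) < δ * m from mul_pos hδ0 hm0)] with h hh
  have hρh : dualNorm H (0 + h) = dualNorm H h := by rw [zero_add]
  rw [zero_add]
  have hρ0 : dualNorm H (0 : EuclideanSpace ℝ (Fin N)) = 0 := hg.dual_zero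
  have hρnn : 0 ≤ dualNorm H h := hg.dual_nonneg h
  have hhn : ‖h‖ < δ * m := by simpa [dist_zero_right] using hh
  have hρlt : dualNorm H h < δ := by
    have h1 : dualNorm H h ≤ ‖h‖ / m := hupper h
    have h2 : ‖h‖ / m < δ := by
      rw [div_lt_iff₀ hm0]
      linarith [hhn]
    linarith
  have hmem1 : dualNorm H h ∈ Metric.ball (0:ℝ) δ := by
    rw [Metric.mem_ball, Real.dist_eq, sub_zero, abs_of_nonneg hρnn]
    exact hρlt
  have hmem0 : (0:ℝ) ∈ Metric.ball (0:ℝ) δ := Metric.mem_ball_self hδ0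
  have hmvt := (convex_ball (0:ℝ) δ).norm_image_sub_le_of_norm_deriv_le
    (fun t _ => hd t) hball hmem0 hmem1
  simp only [sub_zero] at hmvt
  calc ‖φ (dualNorm H h) - φ (dualNorm H 0) - 0‖
      = ‖φ (dualNorm H h) - φ 0‖ := by rw [hρ0, sub_zero]
    _ ≤ c * m * ‖dualNorm H h‖ := hmvt
    _ = c * m * dualNorm H h := by rw [Real.norm_eq_abs, abs_of_nonneg hρnn]
    _ ≤ c * m * (‖h‖ / m) := by
        apply mul_le_mul_of_nonneg_left (hupper h) hcm.le
    _ = c * ‖h‖ := by field_simp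
    
lemma field_deriv_zero {φ : ℝ → ℝ} (hc1dual : ContDiffOn ℝ 1 (dualNorm H) {y | y ≠ 0})
    (hd : Differentiable ℝ φ) (hd' : Differentiable ℝ (deriv φ)) (hφ0 : deriv φ 0 = 0) :
    HasFDerivAt (fun y => H (gradient (fun z => φ (dualNorm H z)) y) •
        gradient H (gradient (fun z => φ (dualNorm H z)) y))
      ((deriv (deriv φ) 0) • ContinuousLinearMap.id ℝ (EuclideanSpace ℝ (Fin N)))
      (0 : EuclideanSpace ℝ (Fin N)) := by
  obtain ⟨m, hm0, hm⟩ := hg.exists_lower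
  have hupper : ∀ y : EuclideanSpace ℝ (Fin N), dualNorm H y ≤ ‖y‖ / m :=
    fun y => hg.dual_upper hm0 hm y
  set κ := deriv (deriv φ) 0 with hκ
  have hgrad0 : gradient (fun z => φ (dualNorm H z)) (0 : EuclideanSpace ℝ (Fin N)) = 0 :=
    (hg.grad_zero_at_zero hd (hd'.continuous) hφ0).gradient
  have hF0 : H (gradient (fun z => φ (dualNorm H z)) (0 : EuclideanSpace ℝ (Fin N))) •
      gradient H (gradient (fun z => φ (dualNorm H z)) (0 : EuclideanSpace ℝ (Fin N))) = 0 := by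
    rw [hgrad0, hg.zero, zero_smul]
  rw [hasFDerivAt_iff_isLittleO_nhds_zero]
  rw [Asymptotics.isLittleO_iff]
  intro c hc
  have hder : HasDerivAt (deriv φ) κ 0 := (hd' 0).hasDerivAt
  have hlo := hder.isLittleO
  rw [Asymptotics.isLittleO_iff] at hlo
  have hev := hlo hc
  rw [Metric.eventually_nhds_iff] at hev
  obtain ⟨δ, hδ0, hδ⟩ := hev
  filter_upwards [Metric.ball_mem_nhds (0 : EuclideanSpace ℝ (Fin N))
    (show (0:ℝ) < δ * m from mul_pos hδ0 hm0)] with h hh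
  rw [zero_add, hF0, sub_zero]
  rcases eq_or_ne h 0 with rfl | hne
  · rw [hF0]; simp
  · have hρh : 0 < dualNorm H h := hg.dual_pos hne
    have hhn : ‖h‖ < δ * m := by simpa [dist_zero_right] using hh
    have hρlt : dualNorm H h < δ := by
      have h1 : dualNorm H h ≤ ‖h‖ / m := hupper h
      have h2 : ‖h‖ / m < δ := by
        rw [div_lt_iff₀ hm0]
        linarith
      linarith
    have hFh : H (gradient (fun z => φ (dualNorm H z)) h) •
        gradient H (gradient (fun z => φ (dualNorm H z)) h)
        = (deriv φ (dualNorm H h) / dualNorm H h) • h :=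
      hg.field_formula hc1dual hne (hd (dualNorm H h)).hasDerivAt
    rw [hFh]
    have hslope : ‖deriv φ (dualNorm H h) - dualNorm H h * κ‖ ≤ c * dualNorm H h := by
      have := hδ (y := dualNorm H h) (by
        rw [Real.dist_eq, sub_zero, abs_of_nonneg hρh.le]; exact hρlt)
      rw [hφ0, sub_zero] at this
      calc ‖deriv φ (dualNorm H h) - dualNorm H h * κ‖
          = ‖deriv φ (dualNorm H h) - (dualNorm H h - 0) • κ‖ := by
            rw [sub_zero, smul_eq_mul]
        _ ≤ c * ‖dualNorm H h - 0‖ := this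
        _ = c * dualNorm H h := by rw [sub_zero, Real.norm_eq_abs, abs_of_nonneg hρh.le]
    have hcoeff : ‖deriv φ (dualNorm H h) / dualNorm H h - κ‖ ≤ c := by
      rw [Real.norm_eq_abs]
      have heq : deriv φ (dualNorm H h) / dualNorm H h - κ
          = (deriv φ (dualNorm H h) - dualNorm H h * κ) / dualNorm H h := by
        field_simp
      rw [heq, abs_div, abs_of_nonneg hρh.le, div_le_iff₀ hρh]
      simpa [Real.norm_eq_abs] using hslope
    calc ‖(deriv φ (dualNorm H h) / dualNorm H h) • h
          - (κ • ContinuousLinearMap.id ℝ (EuclideanSpace ℝ (Fin N))) h‖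
        = ‖(deriv φ (dualNorm H h) / dualNorm H h - κ) • h‖ := by
          rw [ContinuousLinearMap.smul_apply, ContinuousLinearMap.id_apply, ← sub_smul]
      _ = ‖deriv φ (dualNorm H h) / dualNorm H h - κ‖ * ‖h‖ := by rw [norm_smul]
      _ ≤ c * ‖h‖ := mul_le_mul_of_nonneg_right hcoeff (norm_nonneg h)

omit hg in
lemma divg_kappa {F : EuclideanSpace ℝ (Fin N) → EuclideanSpace ℝ (Fin N)}
    {κ : ℝ} {x : EuclideanSpace ℝ (Fin N)}
    (hF : HasFDerivAt F (κ • ContinuousLinearMap.id ℝ (EuclideanSpace ℝ (Fin N))) x) :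
    divg F x = N * κ := by
  unfold divg
  rw [hF.fderiv]
  simp only [ContinuousLinearMap.smul_apply, ContinuousLinearMap.id_apply,
    PiLp.smul_apply, smul_eq_mul, EuclideanSpace.single_apply, if_pos rfl, mul_one]
  rw [Finset.sum_const, Finset.card_univ, Fintype.card_fin, nsmul_eq_mul]
  simp

lemma main_zero (hc1dual : ContDiffOn ℝ 1 (dualNorm H) {y | y ≠ 0})
    {hv hw : ℝ → ℝ} (hvD : Differentiable ℝ hv) (hwD : Differentiable ℝ hw)
    (hvD' : Differentiable ℝ (deriv hv)) (hwD' : Differentiable ℝ (deriv hw))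
    (hv0 : deriv hv 0 = 0) (hw0 : deriv hw 0 = 0) (α β : ℝ) :
    divg (fun y => H (gradient (fun z => α * hv (dualNorm H z) + β * hw (dualNorm H z)) y) •
        gradient H (gradient (fun z => α * hv (dualNorm H z) + β * hw (dualNorm H z)) y))
        (0 : EuclideanSpace ℝ (Fin N))
      = α * divg (fun y => H (gradient (fun z => hv (dualNorm H z)) y) •
          gradient H (gradient (fun z => hv (dualNorm H z)) y)) (0 : EuclideanSpace ℝ (Fin N))
        + β * divg (fun y => H (gradient (fun z => hw (dualNorm H z)) y) •
            gradient H (gradient (fun z => hw (dualNorm H z)) y))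
            (0 : EuclideanSpace ℝ (Fin N)) := by
  have hcD : Differentiable ℝ (fun t => α * hv t + β * hw t) :=
    ((hvD.const_mul α).add (hwD.const_mul β))
  have hder_eq : deriv (fun t => α * hv t + β * hw t)
      = fun t => α * deriv hv t + β * deriv hw t := by
    funext t
    rw [deriv_fun_add ((hvD t).const_mul α) ((hwD t).const_mul β),
      deriv_const_mul α (hvD t), deriv_const_mul β (hwD t)]
  have hcD' : Differentiable ℝ (deriv (fun t => α * hv t + β * hw t)) := by
    rw [hder_eq]
    exact ((hvD'.const_mul α).add (hwD'.const_mul β))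
  have hc0 : deriv (fun t => α * hv t + β * hw t) 0 = 0 := by
    rw [hder_eq]
    simp [hv0, hw0]
  have hκc : deriv (deriv (fun t => α * hv t + β * hw t)) 0
      = α * deriv (deriv hv) 0 + β * deriv (deriv hw) 0 := by
    rw [hder_eq]
    rw [deriv_fun_add ((hvD' 0).const_mul α) ((hwD' 0).const_mul β),
      deriv_const_mul α (hvD' 0), deriv_const_mul β (hwD' 0)]
  rw [divg_kappa (hg.field_deriv_zero hc1dual hcD hcD' hc0),
    divg_kappa (hg.field_deriv_zero hc1dual hvD hvD' hv0),
    divg_kappa (hg.field_deriv_zero hc1dual hwD hwD' hw0), hκc]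
  ring

end GoodNorm

theorem stmt_10 {N : ℕ} (H : EuclideanSpace ℝ (Fin N) → ℝ)
    (hH0 : ∀ ξ, 0 ≤ H ξ) (hHz : ∀ ξ, H ξ = 0 ↔ ξ = 0)
    (hconv : ConvexOn ℝ Set.univ H)
    (hhom : ∀ (a : ℝ) ξ, H (a • ξ) = |a| * H ξ)
    (hC1 : ContDiffOn ℝ 1 H {ξ | ξ ≠ 0})
    (hC1dual : ContDiffOn ℝ 1 (dualNorm H) {x | x ≠ 0})
    (vsharp wsharp : ℝ → ℝ)
    (hvstar : ContDiff ℝ 2 (fun x : EuclideanSpace ℝ (Fin N) => vsharp ‖x‖))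
    (hwstar : ContDiff ℝ 2 (fun x : EuclideanSpace ℝ (Fin N) => wsharp ‖x‖))
    (v w : EuclideanSpace ℝ (Fin N) → ℝ)
    (hv : ∀ x, v x = vsharp (dualNorm H x))
    (hw : ∀ x, w x = wsharp (dualNorm H x)) :
    ∀ (α β : ℝ) (x : EuclideanSpace ℝ (Fin N)),
      finslerLap H (fun y => α * v y + β * w y) x
        = α * finslerLap H v x + β * finslerLap H w x := by
  intro α β x
  rcases Nat.eq_zero_or_pos N with hN0 | hNpos
  · subst hN0
    simp [finslerLap, divg]
  · have hg : GoodNorm H := ⟨hH0, hHz, hconv, hhom, hC1, hNpos⟩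
    set x₀ : EuclideanSpace ℝ (Fin N) := EuclideanSpace.single ⟨0, hNpos⟩ (1:ℝ) with hx₀def
    have hx₀ : ‖x₀‖ = 1 := by simp [hx₀def, EuclideanSpace.norm_single]
    set hvr : ℝ → ℝ := fun t => vsharp ‖t • x₀‖ with hvrdef
    set hwr : ℝ → ℝ := fun t => wsharp ‖t • x₀‖ with hwrdef
    have hsm : ContDiff ℝ 2 (fun t : ℝ => t • x₀) := contDiff_id.smul contDiff_const
    have hvrC2 : ContDiff ℝ 2 hvr := hvstar.comp hsm
    have hwrC2 : ContDiff ℝ 2 hwr := hwstar.comp hsm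
    have hvr_eq : ∀ t : ℝ, 0 ≤ t → hvr t = vsharp t := by
      intro t ht
      rw [hvrdef]
      simp [norm_smul, hx₀, abs_of_nonneg ht]
    have hwr_eq : ∀ t : ℝ, 0 ≤ t → hwr t = wsharp t := by
      intro t ht
      rw [hwrdef]
      simp [norm_smul, hx₀, abs_of_nonneg ht]
    have hveq : v = fun y => hvr (dualNorm H y) :=
      funext fun y => by rw [hv y, hvr_eq _ (hg.dual_nonneg y)]
    have hweq : w = fun y => hwr (dualNorm H y) :=
      funext fun y => by rw [hw y, hwr_eq _ (hg.dual_nonneg y)]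
    have hvD : Differentiable ℝ hvr := hvrC2.differentiable (by norm_num)
    have hwD : Differentiable ℝ hwr := hwrC2.differentiable (by norm_num)
    have hvD' : Differentiable ℝ (deriv hvr) := by
      have h2 : ContDiff ℝ ((1:ℕ) + 1) hvr := by exact_mod_cast hvrC2
      exact ((contDiff_succ_iff_deriv.mp h2).2.2).differentiable (by norm_num)
    have hwD' : Differentiable ℝ (deriv hwr) := by
      have h2 : ContDiff ℝ ((1:ℕ) + 1) hwr := by exact_mod_cast hwrC2
      exact ((contDiff_succ_iff_deriv.mp h2).2.2).differentiable (by norm_num)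
    have hvr_even : ∀ t, hvr (-t) = hvr t := by
      intro t
      rw [hvrdef]
      simp [norm_smul]
    have hwr_even : ∀ t, hwr (-t) = hwr t := by
      intro t
      rw [hwrdef]
      simp [norm_smul]
    have hv0 : deriv hvr 0 = 0 := even_deriv_zero hvD hvr_even
    have hw0 : deriv hwr 0 = 0 := even_deriv_zero hwD hwr_even
    rw [hveq, hweq]
    rcases eq_or_ne x 0 with rfl | hx
    · exact hg.main_zero hC1dual hvD hwD hvD' hwD' hv0 hw0 α β
    · exact hg.main_ne hC1dual hvD hwD hvD' hwD' α β hx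
end

section
/- Let Λ > 0 and set S_Λ := 1/(4Λ). Then v(x,t) := (1 − 4Λt)^{−N/2} exp(Λ H₀(x)²/(1 − 4Λt)) satisfies ∂_t v = Δ_H v on ℝ^N × (0, S_Λ), where Δ_H is the Finsler-Laplace operator associated to H and H₀ is the dual norm of H. -/
set_option linter.unusedSectionVars false
set_option maxHeartbeats 1000000

open MeasureTheory Real InnerProductSpace Set Filter Topology
open scoped Gradient

structure NormData (N : ℕ) where
  H : EuclideanSpace ℝ (Fin N) → ℝ
  nonneg : ∀ ξ, 0 ≤ H ξ
  zero_iff : ∀ ξ, H ξ = 0 ↔ ξ = 0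
  conv : ConvexOn ℝ Set.univ H
  hom : ∀ (a : ℝ) ξ, H (a • ξ) = |a| * H ξ
  c1 : ContDiffOn ℝ 1 H {ξ | ξ ≠ 0}
  c1d : ContDiffOn ℝ 1 (dualNorm H) {x | x ≠ 0}

namespace NormData

variable {N : ℕ} (D : NormData N)

local notation "E" => EuclideanSpace ℝ (Fin N)

lemma Hzero : D.H 0 = 0 := (D.zero_iff 0).2 rfl

lemma Hpos {ξ : E} (h : ξ ≠ 0) : 0 < D.H ξ :=
  lt_of_le_of_ne (D.nonneg ξ) (fun h' => h ((D.zero_iff ξ).1 h'.symm))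

lemma Htri (a b : E) : D.H (a + b) ≤ D.H a + D.H b := by
  have h := D.conv.2 (mem_univ a) (mem_univ b)
    (by norm_num : (0:ℝ) ≤ 1/2) (by norm_num : (0:ℝ) ≤ 1/2) (by norm_num)
  have h2 : D.H (a + b) = 2 * D.H ((1/2 : ℝ) • a + (1/2 : ℝ) • b) := by
    have e : a + b = (2:ℝ) • ((1/2 : ℝ) • a + (1/2 : ℝ) • b) := by
      rw [smul_add, smul_smul, smul_smul]; norm_num
    rw [e, D.hom]; norm_num
  simp only [smul_eq_mul] at h
  rw [h2]; linarith

lemma Hcont : Continuous D.H := by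
  rw [← continuousOn_univ]
  exact D.conv.continuousOn isOpen_univ

lemma Hsum {ι : Type*} (s : Finset ι) (f : ι → E) :
    D.H (∑ i ∈ s, f i) ≤ ∑ i ∈ s, D.H (f i) := by
  classical
  induction s using Finset.cons_induction with
  | empty => simp [D.Hzero]
  | cons i s hi ih =>
      rw [Finset.sum_cons, Finset.sum_cons]
      exact le_trans (D.Htri _ _) (by linarith)

lemma abs_coord_le (x : E) (i : Fin N) : |x i| ≤ ‖x‖ := by
  have h := abs_real_inner_le_norm (EuclideanSpace.single i (1:ℝ)) x
  simpa [EuclideanSpace.inner_single_left, EuclideanSpace.norm_single] using h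

lemma Hub : ∃ C : ℝ, 0 < C ∧ ∀ ξ : E, D.H ξ ≤ C * ‖ξ‖ := by
  classical
  refine ⟨(∑ i : Fin N, D.H (EuclideanSpace.single i 1)) + 1, ?_, ?_⟩
  · have h1 : (0:ℝ) ≤ ∑ i : Fin N, D.H (EuclideanSpace.single i 1) :=
      Finset.sum_nonneg fun i _ => D.nonneg _
    linarith
  intro ξ
  have hξ : ξ = ∑ i : Fin N, (ξ i) • EuclideanSpace.single i (1:ℝ) := by
    have h := (EuclideanSpace.basisFun (Fin N) ℝ).sum_repr ξ
    simp only [EuclideanSpace.basisFun_apply, EuclideanSpace.basisFun_repr] at h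
    exact h.symm
  calc D.H ξ ≤ ∑ i : Fin N, D.H ((ξ i) • EuclideanSpace.single i (1:ℝ)) := by
        conv_lhs => rw [hξ]
        exact D.Hsum _ _
    _ = ∑ i : Fin N, |ξ i| * D.H (EuclideanSpace.single i (1:ℝ)) := by
        simp [D.hom]
    _ ≤ ∑ i : Fin N, ‖ξ‖ * D.H (EuclideanSpace.single i (1:ℝ)) := by
        refine Finset.sum_le_sum fun i _ => ?_
        exact mul_le_mul_of_nonneg_right (abs_coord_le ξ i) (D.nonneg _)
    _ = (∑ i : Fin N, D.H (EuclideanSpace.single i (1:ℝ))) * ‖ξ‖ := by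
        rw [← Finset.mul_sum, mul_comm]
    _ ≤ ((∑ i : Fin N, D.H (EuclideanSpace.single i (1:ℝ))) + 1) * ‖ξ‖ := by
        have : (0:ℝ) ≤ ‖ξ‖ := norm_nonneg _
        nlinarith

lemma Hlb : ∃ c : ℝ, 0 < c ∧ ∀ ξ : E, c * ‖ξ‖ ≤ D.H ξ := by
  rcases Nat.eq_zero_or_pos N with hN | hN
  · refine ⟨1, one_pos, fun ξ => ?_⟩
    subst hN
    have : ξ = 0 := Subsingleton.elim _ _
    simp [this, D.Hzero]
  · have hne : (Metric.sphere (0:E) 1).Nonempty := by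
      refine ⟨EuclideanSpace.single ⟨0, hN⟩ 1, ?_⟩
      simp [EuclideanSpace.norm_single]
    obtain ⟨z, hz, hmin⟩ := (isCompact_sphere (0:E) 1).exists_isMinOn hne
      D.Hcont.continuousOn
    have hz1 : ‖z‖ = 1 := by simpa using hz
    have hzne : z ≠ 0 := by intro h; rw [h] at hz1; simp at hz1
    refine ⟨D.H z, D.Hpos hzne, fun ξ => ?_⟩
    rcases eq_or_ne ξ 0 with rfl | hξ
    · simp [D.Hzero]
    · have hn : ‖ξ‖ ≠ 0 := norm_ne_zero_iff.2 hξ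
      have hu : (‖ξ‖⁻¹ • ξ) ∈ Metric.sphere (0:E) 1 := by
        simp [norm_smul, abs_of_nonneg (norm_nonneg ξ), inv_mul_cancel₀ hn]
      have h1 : D.H z ≤ D.H (‖ξ‖⁻¹ • ξ) := hmin hu
      have h2 : D.H (‖ξ‖⁻¹ • ξ) = ‖ξ‖⁻¹ * D.H ξ := by
        rw [D.hom]; congr 1; rw [abs_of_nonneg]; positivity
      rw [h2] at h1
      have : ‖ξ‖ * D.H z ≤ ‖ξ‖ * (‖ξ‖⁻¹ * D.H ξ) :=
        mul_le_mul_of_nonneg_left h1 (norm_nonneg _)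
      rw [← mul_assoc, mul_inv_cancel₀ hn, one_mul] at this
      linarith [this]


section Dual

variable [ne0 : Nonempty {ξ : EuclideanSpace ℝ (Fin N) // ξ ≠ 0}]

lemma bddDual (x : E) :
    BddAbove (Set.range fun ξ : {ξ : E // ξ ≠ 0} => (inner ℝ x ξ.1 : ℝ) / D.H ξ.1) := by
  obtain ⟨c, hc, hlb⟩ := D.Hlb
  refine ⟨‖x‖ / c, ?_⟩
  rintro _ ⟨ξ, rfl⟩
  have hHpos : 0 < D.H ξ.1 := D.Hpos ξ.2
  rw [div_le_div_iff₀ hHpos hc]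
  have h1 : (inner ℝ x ξ.1 : ℝ) ≤ ‖x‖ * ‖ξ.1‖ := real_inner_le_norm x ξ.1
  have h2 : c * ‖ξ.1‖ ≤ D.H ξ.1 := hlb ξ.1
  nlinarith [norm_nonneg x, norm_nonneg ξ.1]

lemma dual_le (x ξ : E) : (inner ℝ x ξ : ℝ) ≤ dualNorm D.H x * D.H ξ := by
  rcases eq_or_ne ξ 0 with rfl | hξ
  · simp [D.Hzero]
  · have h := le_ciSup (D.bddDual x) ⟨ξ, hξ⟩
    rw [div_le_iff₀ (D.Hpos hξ)] at h
    exact h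

lemma dual_nonneg (x : E) : 0 ≤ dualNorm D.H x := by
  have ξ := Classical.arbitrary {ξ : E // ξ ≠ 0}
  rcases le_or_gt 0 ((inner ℝ x ξ.1 : ℝ) / D.H ξ.1) with h | h
  · exact le_trans h (le_ciSup (D.bddDual x) ξ)
  · have hξn : (-ξ.1) ≠ 0 := neg_ne_zero.2 ξ.2
    have hH : D.H (-ξ.1) = D.H ξ.1 := by
      have := D.hom (-1) ξ.1; simpa using this
    have h2 := le_ciSup (D.bddDual x) ⟨-ξ.1, hξn⟩
    simp only [inner_neg_right, hH] at h2
    rw [neg_div] at h2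
    exact le_trans (by linarith) h2

lemma dual_pos {x : E} (hx : x ≠ 0) : 0 < dualNorm D.H x := by
  have h := le_ciSup (D.bddDual x) ⟨x, hx⟩
  have hx2 : (0:ℝ) < (inner ℝ x x : ℝ) / D.H x := by
    have h1 : (0:ℝ) < (inner ℝ x x : ℝ) := by
      rw [real_inner_self_eq_norm_sq]
      have : ‖x‖ ≠ 0 := norm_ne_zero_iff.2 hx
      positivity
    exact div_pos h1 (D.Hpos hx)
  exact lt_of_lt_of_le hx2 h

lemma dual_zero : dualNorm D.H 0 = 0 := by
  refine le_antisymm (ciSup_le fun ξ => by simp) (D.dual_nonneg 0)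

lemma dual_smul (x : E) {τ : ℝ} (hτ : 0 < τ) :
    dualNorm D.H (τ • x) = τ * dualNorm D.H x := by
  refine le_antisymm (ciSup_le fun ξ => ?_) ?_
  · have h : (inner ℝ (τ • x) ξ.1 : ℝ) / D.H ξ.1 = τ * ((inner ℝ x ξ.1 : ℝ) / D.H ξ.1) := by
      rw [real_inner_smul_left]; ring
    rw [h]
    exact mul_le_mul_of_nonneg_left (le_ciSup (D.bddDual x) ξ) hτ.le
  · rw [mul_comm, ← le_div_iff₀ hτ]
    refine ciSup_le fun ξ => ?_
    rw [div_le_div_iff₀ (D.Hpos ξ.2) hτ, mul_comm (dualNorm D.H (τ • x)) (D.H ξ.1)]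
    calc (inner ℝ x ξ.1 : ℝ) * τ = (inner ℝ (τ • x) ξ.1 : ℝ) := by
          rw [real_inner_smul_left]; ring
      _ ≤ dualNorm D.H (τ • x) * D.H ξ.1 := D.dual_le _ _
      _ = D.H ξ.1 * dualNorm D.H (τ • x) := mul_comm _ _

lemma dual_tri (a b : E) : dualNorm D.H (a + b) ≤ dualNorm D.H a + dualNorm D.H b := by
  refine ciSup_le fun ξ => ?_
  have h : (inner ℝ (a + b) ξ.1 : ℝ) / D.H ξ.1
      = (inner ℝ a ξ.1 : ℝ) / D.H ξ.1 + (inner ℝ b ξ.1 : ℝ) / D.H ξ.1 := by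
    rw [inner_add_left, add_div]
  rw [h]
  exact add_le_add (le_ciSup (D.bddDual a) ξ) (le_ciSup (D.bddDual b) ξ)

lemma dual_smul' (x : E) {τ : ℝ} (hτ : 0 ≤ τ) :
    dualNorm D.H (τ • x) = τ * dualNorm D.H x := by
  rcases hτ.eq_or_lt with rfl | h
  · simp [D.dual_zero]
  · exact D.dual_smul x h

lemma dual_convexOn : ConvexOn ℝ Set.univ (dualNorm D.H) := by
  refine ⟨convex_univ, fun a _ b _ p q hp hq hpq => ?_⟩
  calc dualNorm D.H (p • a + q • b)
      ≤ dualNorm D.H (p • a) + dualNorm D.H (q • b) := D.dual_tri _ _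
    _ = p * dualNorm D.H a + q * dualNorm D.H b := by
        rw [D.dual_smul' a hp, D.dual_smul' b hq]
    _ = p • dualNorm D.H a + q • dualNorm D.H b := by simp [smul_eq_mul]

end Dual

lemma diffH {ξ : E} (h : ξ ≠ 0) : DifferentiableAt ℝ D.H ξ := by
  have hop : IsOpen {ξ : E | ξ ≠ 0} := isOpen_ne
  exact (D.c1.differentiableOn one_ne_zero).differentiableAt (hop.mem_nhds h)

lemma diffDual {x : E} (h : x ≠ 0) : DifferentiableAt ℝ (dualNorm D.H) x := by
  have hop : IsOpen {x : E | x ≠ 0} := isOpen_ne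
  exact (D.c1d.differentiableOn one_ne_zero).differentiableAt (hop.mem_nhds h)

lemma gradH {ξ : E} (h : ξ ≠ 0) : HasGradientAt D.H (∇ D.H ξ) ξ :=
  (D.diffH h).hasFDerivAt.hasGradientAt

lemma gradDual {x : E} (h : x ≠ 0) :
    HasGradientAt (dualNorm D.H) (∇ (dualNorm D.H) x) x :=
  (D.diffDual h).hasFDerivAt.hasGradientAt


section Duality

variable [ne0 : Nonempty {ξ : EuclideanSpace ℝ (Fin N) // ξ ≠ 0}]

lemma dual_euler {x : E} (hx : x ≠ 0) :
    (inner ℝ (∇ (dualNorm D.H) x) x : ℝ) = dualNorm D.H x := by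
  set g := ∇ (dualNorm D.H) x with hg
  have hgf : HasFDerivAt (dualNorm D.H) (toDual ℝ E g) x := (D.gradDual hx).hasFDerivAt
  have hc : HasDerivAt (fun τ : ℝ => τ • x) x 1 := by
    simpa using (hasDerivAt_id (1:ℝ)).smul_const x
  have hgf' : HasFDerivAt (dualNorm D.H) (toDual ℝ E g) ((1:ℝ) • x) := by
    rwa [one_smul]
  have h1 : HasDerivAt (fun τ : ℝ => dualNorm D.H (τ • x)) (toDual ℝ E g x) 1 := by
    have := hgf'.comp_hasDerivAt 1 hc; exact this
  have h2 : HasDerivAt (fun τ : ℝ => τ * dualNorm D.H x) (dualNorm D.H x) 1 := by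
    simpa using (hasDerivAt_id (1:ℝ)).mul_const (dualNorm D.H x)
  have heq : (fun τ : ℝ => τ * dualNorm D.H x) =ᶠ[𝓝 (1:ℝ)]
      (fun τ : ℝ => dualNorm D.H (τ • x)) := by
    filter_upwards [Ioi_mem_nhds (zero_lt_one (α := ℝ))] with τ hτ
    exact (D.dual_smul x hτ).symm
  have h1' : HasDerivAt (fun τ : ℝ => τ * dualNorm D.H x) (toDual ℝ E g x) 1 :=
    h1.congr_of_eventuallyEq heq
  have := h1'.unique h2
  rw [toDual_apply_apply] at this
  exact this

lemma dual_subgrad {x : E} (hx : x ≠ 0) (y : E) :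
    (inner ℝ (∇ (dualNorm D.H) x) y : ℝ) ≤ dualNorm D.H y := by
  set g := ∇ (dualNorm D.H) x with hgdef
  set f : ℝ → ℝ := fun τ => dualNorm D.H (x + τ • (y - x)) with hfdef
  have hder : HasDerivAt f (inner ℝ g (y - x) : ℝ) 0 := by
    have hc : HasDerivAt (fun τ : ℝ => x + τ • (y - x)) (y - x) 0 := by
      simpa using ((hasDerivAt_id (0:ℝ)).smul_const (y - x)).const_add x
    have hgf : HasFDerivAt (dualNorm D.H) (toDual ℝ E g) (x + (0:ℝ) • (y - x)) := by
      rw [zero_smul, add_zero]; exact (D.gradDual hx).hasFDerivAt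
    have := hgf.comp_hasDerivAt 0 hc
    rw [toDual_apply_apply] at this; exact this
  have hslope : ∀ τ ∈ Ioc (0:ℝ) 1, slope f 0 τ ≤ dualNorm D.H y - dualNorm D.H x := by
    intro τ hτ
    have hcv := D.dual_convexOn.2 (mem_univ x) (mem_univ y)
      (by linarith [hτ.2] : (0:ℝ) ≤ 1 - τ) hτ.1.le (by ring)
    simp only [smul_eq_mul] at hcv
    have hxy : x + τ • (y - x) = (1 - τ) • x + τ • y := by
      rw [smul_sub, sub_smul, one_smul]; abel
    have hfτ : f τ ≤ (1 - τ) * dualNorm D.H x + τ * dualNorm D.H y := by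
      rw [hfdef]; simp only []; rw [hxy]; exact hcv
    rw [slope_def_field]
    have hf0 : f 0 = dualNorm D.H x := by simp [hfdef]
    rw [hf0]
    rw [div_le_iff₀ (by linarith [hτ.1] : (0:ℝ) < τ - 0)]
    have : τ - 0 = τ := by ring
    rw [this]
    nlinarith [hτ.1]
  have htend : Tendsto (slope f 0) (𝓝[>] (0:ℝ)) (𝓝 (inner ℝ g (y - x) : ℝ)) :=
    (hasDerivAt_iff_tendsto_slope.1 hder).mono_left
      (nhdsWithin_mono 0 (fun τ hτ => ne_of_gt hτ))
  have hle : (inner ℝ g (y - x) : ℝ) ≤ dualNorm D.H y - dualNorm D.H x := by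
    refine le_of_tendsto htend ?_
    filter_upwards [Ioc_mem_nhdsGT_of_mem (by constructor <;> norm_num : (0:ℝ) ∈ Ico (0:ℝ) 1)]
      with τ hτ using hslope τ hτ
  rw [inner_sub_right] at hle
  have he := D.dual_euler hx
  rw [← hgdef] at he
  linarith [hle, he.ge]

lemma H_grad_dual_eq_one {x : E} (hx : x ≠ 0) : D.H (∇ (dualNorm D.H) x) = 1 := by
  set g := ∇ (dualNorm D.H) x with hgdef
  have heuler : (inner ℝ g x : ℝ) = dualNorm D.H x := D.dual_euler hx
  have hpos := D.dual_pos hx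
  have hge : 1 ≤ D.H g := by
    have h := D.dual_le x g
    rw [real_inner_comm] at h
    nlinarith
  have hle : D.H g ≤ 1 := by
    by_contra hgt
    push_neg at hgt
    have hKconv : Convex ℝ {ξ : E | D.H ξ ≤ 1} := by
      have := D.conv.convex_le 1
      simpa using this
    have hKclosed : IsClosed {ξ : E | D.H ξ ≤ 1} :=
      IsClosed.preimage D.Hcont isClosed_Iic
    have hgK : g ∉ {ξ : E | D.H ξ ≤ 1} := by
      simp only [mem_setOf_eq, not_le]; exact hgt
    obtain ⟨f, u, hfa, hfg⟩ := geometric_hahn_banach_closed_point hKconv hKclosed hgK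
    set y := (toDual ℝ E).symm f with hydef
    have hyf : ∀ z : E, (inner ℝ y z : ℝ) = f z := fun z => toDual_symm_apply
    have hu0 : (0:ℝ) < u := by
      have h0 : (0:E) ∈ {ξ : E | D.H ξ ≤ 1} := by
        simp [mem_setOf_eq, D.Hzero]
      have := hfa 0 h0
      simpa using this
    have hsup : dualNorm D.H y ≤ u := by
      refine ciSup_le fun ξ => ?_
      have hHp := D.Hpos ξ.2
      have hmem : ((D.H ξ.1)⁻¹ • ξ.1) ∈ {ξ : E | D.H ξ ≤ 1} := by
        simp only [mem_setOf_eq, D.hom, abs_of_pos (inv_pos.2 hHp)]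
        rw [inv_mul_cancel₀ (ne_of_gt hHp)]
      have hlt := hfa _ hmem
      rw [← hyf] at hlt
      rw [real_inner_smul_right] at hlt
      rw [div_le_iff₀ hHp]
      have h3 : D.H ξ.1 * ((D.H ξ.1)⁻¹ * (inner ℝ y ξ.1 : ℝ)) < D.H ξ.1 * u :=
        mul_lt_mul_of_pos_left hlt hHp
      rw [← mul_assoc, mul_inv_cancel₀ (ne_of_gt hHp), one_mul] at h3
      nlinarith
    have hsub := D.dual_subgrad hx y
    rw [← hgdef] at hsub
    have hfg' : u < (inner ℝ y g : ℝ) := by rw [hyf]; exact hfg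
    rw [real_inner_comm] at hfg'
    linarith
  linarith

lemma hasGradH_at_grad_dual {x : E} (hx : x ≠ 0) :
    HasGradientAt D.H ((dualNorm D.H x)⁻¹ • x) (∇ (dualNorm D.H) x) := by
  set g := ∇ (dualNorm D.H) x with hgdef
  set p : E := (dualNorm D.H x)⁻¹ • x with hpdef
  have hpos := D.dual_pos hx
  have hgne : g ≠ 0 := by
    intro h
    have h1 := D.H_grad_dual_eq_one hx
    rw [← hgdef, h, D.Hzero] at h1
    norm_num at h1
  have hple : ∀ ξ : E, (inner ℝ p ξ : ℝ) ≤ D.H ξ := by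
    intro ξ
    rw [hpdef, real_inner_smul_left]
    have hd := D.dual_le x ξ
    have h2 : (dualNorm D.H x)⁻¹ * (inner ℝ x ξ : ℝ)
        ≤ (dualNorm D.H x)⁻¹ * (dualNorm D.H x * D.H ξ) :=
      mul_le_mul_of_nonneg_left hd (inv_nonneg.2 hpos.le)
    rwa [← mul_assoc, inv_mul_cancel₀ (ne_of_gt hpos), one_mul] at h2
  have hpg : (inner ℝ p g : ℝ) = 1 := by
    rw [hpdef, hgdef, real_inner_smul_left, real_inner_comm, D.dual_euler hx]
    exact inv_mul_cancel₀ (ne_of_gt hpos)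
  have hHg : D.H g = 1 := D.H_grad_dual_eq_one hx
  have hmin : IsLocalMin (fun ξ : E => D.H ξ - (inner ℝ p ξ : ℝ)) g :=
    Filter.Eventually.of_forall fun ξ => by
      have h1 := hple ξ
      simp only [hHg, hpg]
      linarith
  have hlin : HasFDerivAt (fun ξ : E => (inner ℝ p ξ : ℝ)) (toDual ℝ E p) g := by
    have : (fun ξ : E => (inner ℝ p ξ : ℝ)) = ⇑(toDual ℝ E p) := by
      funext ξ; rw [toDual_apply_apply]
    rw [this]
    exact (toDual ℝ E p).hasFDerivAt
  have hφ : HasFDerivAt (fun ξ : E => D.H ξ - (inner ℝ p ξ : ℝ))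
      (fderiv ℝ D.H g - toDual ℝ E p) g :=
    (D.diffH hgne).hasFDerivAt.sub hlin
  have h0 := hmin.fderiv_eq_zero
  rw [hφ.fderiv] at h0
  have hfd : fderiv ℝ D.H g = toDual ℝ E p := by rwa [sub_eq_zero] at h0
  have h5 : HasFDerivAt D.H (toDual ℝ E p) g := hfd ▸ (D.diffH hgne).hasFDerivAt
  have h6 := h5.hasGradientAt
  rwa [(toDual ℝ E).symm_apply_apply] at h6

lemma grad_H_at_grad_dual {x : E} (hx : x ≠ 0) :
    ∇ D.H (∇ (dualNorm D.H) x) = (dualNorm D.H x)⁻¹ • x :=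
  (D.hasGradH_at_grad_dual hx).gradient

lemma gradH_smul {ξ : E} (hξ : ξ ≠ 0) {lam : ℝ} (hlam : 0 < lam) :
    ∇ D.H (lam • ξ) = ∇ D.H ξ := by
  have hlξ : lam • ξ ≠ 0 := smul_ne_zero (ne_of_gt hlam) hξ
  have hA : HasFDerivAt D.H (fderiv ℝ D.H (lam • ξ)) (lam • ξ) := (D.diffH hlξ).hasFDerivAt
  have hB : HasFDerivAt D.H (fderiv ℝ D.H ξ) ξ := (D.diffH hξ).hasFDerivAt
  have hL : HasFDerivAt (fun y : E => lam • y) (lam • ContinuousLinearMap.id ℝ E) ξ :=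
    (hasFDerivAt_id ξ).const_smul lam
  have hcomp : HasFDerivAt (fun y : E => D.H (lam • y))
      ((fderiv ℝ D.H (lam • ξ)).comp (lam • ContinuousLinearMap.id ℝ E)) ξ :=
    hA.comp ξ hL
  have hcomp2 : HasFDerivAt (fun y : E => D.H (lam • y)) (lam • fderiv ℝ D.H ξ) ξ := by
    have heq : (fun y : E => D.H (lam • y)) = fun y : E => lam * D.H y :=
      funext fun y => by rw [D.hom, abs_of_pos hlam]
    rw [heq]
    exact hB.const_mul lam
  have hAB := hcomp.unique hcomp2
  have hext : fderiv ℝ D.H (lam • ξ) = fderiv ℝ D.H ξ := by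
    ext v
    have h1 := congrArg (fun T : EuclideanSpace ℝ (Fin N) →L[ℝ] ℝ => T v) hAB
    simp only [ContinuousLinearMap.comp_apply, ContinuousLinearMap.smul_apply,
      ContinuousLinearMap.id_apply, smul_eq_mul] at h1
    have h2 : fderiv ℝ D.H (lam • ξ) (lam • v) = lam * fderiv ℝ D.H (lam • ξ) v := by
      rw [(fderiv ℝ D.H (lam • ξ)).map_smul]; simp [smul_eq_mul]
    rw [h2] at h1
    exact mul_left_cancel₀ (ne_of_gt hlam) h1
  unfold gradient
  rw [hext]


lemma dual_ub : ∃ C : ℝ, 0 < C ∧ ∀ x : E, dualNorm D.H x ≤ C * ‖x‖ := by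
  obtain ⟨c, hc, hlb⟩ := D.Hlb
  refine ⟨1/c, by positivity, fun x => ?_⟩
  refine ciSup_le fun ξ => ?_
  have hHp := D.Hpos ξ.2
  rw [div_le_iff₀ hHp]
  have h1 : (inner ℝ x ξ.1 : ℝ) ≤ ‖x‖ * ‖ξ.1‖ := real_inner_le_norm x ξ.1
  have h2 : c * ‖ξ.1‖ ≤ D.H ξ.1 := hlb ξ.1
  have h3 : 1/c * ‖x‖ * (c * ‖ξ.1‖) ≤ 1/c * ‖x‖ * D.H ξ.1 := by
    apply mul_le_mul_of_nonneg_left h2; positivity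
  have h4 : 1/c * ‖x‖ * (c * ‖ξ.1‖) = ‖x‖ * ‖ξ.1‖ := by field_simp
  linarith

lemma hasGrad_dualSq {x : E} (hx : x ≠ 0) :
    HasGradientAt (fun y => dualNorm D.H y ^ 2)
      ((2 * dualNorm D.H x) • ∇ (dualNorm D.H) x) x := by
  rw [hasGradientAt_iff_hasFDerivAt]
  have heq : (fun y : E => dualNorm D.H y ^ 2)
      = fun y : E => dualNorm D.H y * dualNorm D.H y := funext fun y => pow_two _
  rw [heq]
  have h2 := ((D.gradDual hx).hasFDerivAt).mul ((D.gradDual hx).hasFDerivAt)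
  convert h2 using 1
  · rfl
  · rfl
  rw [mul_comm, map_smul, mul_two, add_smul]

lemma hasGrad_dualSq_zero : HasGradientAt (fun y => dualNorm D.H y ^ 2) 0 0 := by
  rw [hasGradientAt_iff_hasFDerivAt, map_zero]
  rw [hasFDerivAt_iff_isLittleO_nhds_zero, Asymptotics.isLittleO_iff]
  intro ε hε
  obtain ⟨C, hC, hub⟩ := D.dual_ub
  have hδ : (0:ℝ) < ε / C^2 := by positivity
  filter_upwards [Metric.ball_mem_nhds (0:E) hδ] with y hy
  rw [Metric.mem_ball, dist_zero_right] at hy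
  simp only [zero_add, ContinuousLinearMap.zero_apply]
  have h1 : dualNorm D.H y ≤ C * ‖y‖ := hub y
  have h2 : 0 ≤ dualNorm D.H y := D.dual_nonneg y
  have h3 : dualNorm D.H y ^ 2 ≤ C^2 * ‖y‖^2 := by nlinarith
  have h4 : ‖dualNorm D.H y ^ 2 - dualNorm D.H 0 ^ 2 - 0‖ = dualNorm D.H y ^ 2 := by
    rw [D.dual_zero]
    have : (0:ℝ) ≤ dualNorm D.H y ^ 2 := by positivity
    simp [abs_of_nonneg this]
  rw [h4]
  have h5 : C^2 * ‖y‖^2 ≤ ε * ‖y‖ := by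
    have h6 : C^2 * ‖y‖ ≤ ε := by
      rw [← le_div_iff₀' (by positivity : (0:ℝ) < C^2)]
      exact hy.le
    have := norm_nonneg y
    nlinarith
  calc dualNorm D.H y ^ 2 ≤ C^2*‖y‖^2 := h3
    _ ≤ ε * ‖y‖ := h5


lemma hasGrad_w {c₀ K : ℝ} (hc₀ : 0 < c₀) (y : E) :
    HasGradientAt (fun z => c₀ * Real.exp (K * dualNorm D.H z ^ 2))
      (((c₀ * Real.exp (K * dualNorm D.H y ^ 2)) * (2*K) * dualNorm D.H y)
        • ∇ (dualNorm D.H) y) y := by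
  rcases eq_or_ne y 0 with rfl | hy
  · have hq := D.hasGrad_dualSq_zero.hasFDerivAt
    have h1 := hq.const_mul K
    have h2 := h1.exp
    have h3 := h2.const_mul c₀
    rw [hasGradientAt_iff_hasFDerivAt]
    convert h3 using 1
    · rfl
    ext z
    simp [toDual_apply_apply, real_inner_smul_left, D.dual_zero]
  · have hq := (D.hasGrad_dualSq hy).hasFDerivAt
    have h1 := hq.const_mul K
    have h2 := h1.exp
    have h3 := h2.const_mul c₀
    rw [hasGradientAt_iff_hasFDerivAt]
    convert h3 using 1
    · rfl
    ext z
    simp [toDual_apply_apply, real_inner_smul_left]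
    ring

end Duality

end NormData

theorem stmt_11 {N : ℕ} (H : EuclideanSpace ℝ (Fin N) → ℝ)
    (hH0 : ∀ ξ, 0 ≤ H ξ) (hHz : ∀ ξ, H ξ = 0 ↔ ξ = 0)
    (hconv : ConvexOn ℝ Set.univ H)
    (hhom : ∀ (a : ℝ) ξ, H (a • ξ) = |a| * H ξ)
    (hC1 : ContDiffOn ℝ 1 H {ξ | ξ ≠ 0})
    (hC1dual : ContDiffOn ℝ 1 (dualNorm H) {x | x ≠ 0})
    (Λ : ℝ) (hΛ : 0 < Λ)
    (v : EuclideanSpace ℝ (Fin N) → ℝ → ℝ)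
    (hv : ∀ x t, v x t = (1 - 4 * Λ * t) ^ (-(N : ℝ) / 2)
      * Real.exp (Λ * (dualNorm H x) ^ 2 / (1 - 4 * Λ * t))) :
    ∀ (x : EuclideanSpace ℝ (Fin N)) (t : ℝ), t ∈ Set.Ioo 0 (1 / (4 * Λ)) →
      deriv (fun s => v x s) t = finslerLap H (fun y => v y t) x := by
  intro x t ht
  obtain ⟨ht0, ht1⟩ := ht
  have hΛ4 : (0:ℝ) < 4*Λ := by positivity
  have hs0 : (0:ℝ) < 1 - 4*Λ*t := by
    rw [lt_div_iff₀ hΛ4] at ht1; linarith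
  have hsne : (1 - 4*Λ*t) ≠ 0 := ne_of_gt hs0
  by_cases hN : N = 0
  · subst hN
    haveI hie : IsEmpty {ξ : EuclideanSpace ℝ (Fin 0) // ξ ≠ 0} :=
      ⟨fun ξ => ξ.2 (Subsingleton.elim _ _)⟩
    have hdual : dualNorm H x = 0 := Real.iSup_of_isEmpty _
    have hvc : (fun s => v x s) = fun _ => (1:ℝ) := by
      funext τ
      rw [hv, hdual]
      norm_num
    rw [hvc, deriv_const]
    have hfl : finslerLap H (fun y => v y t) x = 0 := by
      simp [finslerLap, divg]
    rw [hfl]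
  · have hNpos : 0 < N := Nat.pos_of_ne_zero hN
    let D : NormData N := ⟨H, hH0, hHz, hconv, hhom, hC1, hC1dual⟩
    haveI ne0 : Nonempty {ξ : EuclideanSpace ℝ (Fin N) // ξ ≠ 0} := by
      refine ⟨⟨EuclideanSpace.single ⟨0, hNpos⟩ 1, fun h => ?_⟩⟩
      have h2 := congrArg (fun z : EuclideanSpace ℝ (Fin N) => ‖z‖) h
      simp [EuclideanSpace.norm_single] at h2
    set Kc : ℝ := Λ / (1 - 4*Λ*t) with hKc
    have hKpos : 0 < Kc := div_pos hΛ hs0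
    set c₀ : ℝ := (1 - 4*Λ*t) ^ (-(N:ℝ)/2) with hc₀def
    have hc₀pos : 0 < c₀ := Real.rpow_pos_of_pos hs0 _
    have hwf : ∀ y, v y t = c₀ * Real.exp (Kc * dualNorm H y ^ 2) := by
      intro y
      rw [hv, hKc, div_mul_eq_mul_div, hc₀def]
    have hvpos : ∀ y, 0 < v y t := fun y => by rw [hwf y]; positivity
    -- gradient of the spatial function
    have hgw : ∀ y, HasGradientAt (fun z => v z t)
        ((v y t * (2*Kc) * dualNorm H y) • ∇ (dualNorm H) y) y := by
      intro y
      have h1 : HasGradientAt (fun z => c₀ * Real.exp (Kc * dualNorm H z ^ 2))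
          (((c₀ * Real.exp (Kc * dualNorm H y ^ 2)) * (2*Kc) * dualNorm H y)
            • ∇ (dualNorm H) y) y := D.hasGrad_w hc₀pos y
      have heq : (fun z => v z t) =ᶠ[nhds y]
          (fun z => c₀ * Real.exp (Kc * dualNorm H z ^ 2)) :=
        Filter.Eventually.of_forall fun z => hwf z
      have h2 := h1.congr_of_eventuallyEq heq
      rwa [← hwf y] at h2
    have hgradw : ∀ y, gradient (fun z => v z t) y
        = (v y t * (2*Kc) * dualNorm H y) • ∇ (dualNorm H) y :=
      fun y => (hgw y).gradient
    -- pointwise identity for the flux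
    have hFeq : (fun y => H (gradient (fun z => v z t) y)
          • gradient H (gradient (fun z => v z t) y))
        = fun y => ((2*Kc) * v y t) • y := by
      funext y
      rw [hgradw y]
      rcases eq_or_ne y 0 with rfl | hy
      · have hd0 : dualNorm H (0 : EuclideanSpace ℝ (Fin N)) = 0 := D.dual_zero
        have hH0' : H (0 : EuclideanSpace ℝ (Fin N)) = 0 := D.Hzero
        rw [hd0]
        simp [hH0']
      · have hdp : 0 < dualNorm H y := D.dual_pos hy
        have hlam : 0 < v y t * (2*Kc) * dualNorm H y := by
          have := hvpos y
          positivity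
        have h1 : H (∇ (dualNorm H) y) = 1 := D.H_grad_dual_eq_one hy
        have hgne : ∇ (dualNorm H) y ≠ 0 := by
          intro h
          have hz : H (0 : EuclideanSpace ℝ (Fin N)) = 0 := D.Hzero
          rw [h, hz] at h1
          norm_num at h1
        have hsm : gradient H ((v y t * (2*Kc) * dualNorm H y) • ∇ (dualNorm H) y)
            = gradient H (∇ (dualNorm H) y) := D.gradH_smul hgne hlam
        have hgr : gradient H (∇ (dualNorm H) y) = (dualNorm H y)⁻¹ • y :=
          D.grad_H_at_grad_dual hy
        rw [hhom, abs_of_pos hlam, hsm, hgr, h1, mul_one, smul_smul]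
        congr 1
        field_simp
    -- divergence computation
    have hDF : HasFDerivAt (fun y => ((2*Kc) * v y t) • y)
        (((2*Kc) * v x t) • ContinuousLinearMap.id ℝ (EuclideanSpace ℝ (Fin N))
          + ((2*Kc) • (toDual ℝ (EuclideanSpace ℝ (Fin N))
              ((v x t * (2*Kc) * dualNorm H x) • ∇ (dualNorm H) x))).smulRight x) x :=
      HasFDerivAt.smul ((hgw x).hasFDerivAt.const_mul (2*Kc)) (hasFDerivAt_id x)
    have hstep : finslerLap H (fun y => v y t) x
        = divg (fun y => ((2*Kc) * v y t) • y) x := by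
      show divg _ x = _
      rw [hFeq]
    have hGx : (inner ℝ ((v x t * (2*Kc) * dualNorm H x) • ∇ (dualNorm H) x) x : ℝ)
        = v x t * (2*Kc) * dualNorm H x ^ 2 := by
      rcases eq_or_ne x 0 with rfl | hx
      · have hd0 : dualNorm H (0 : EuclideanSpace ℝ (Fin N)) = 0 := D.dual_zero
        rw [hd0]
        simp
      · have he : (inner ℝ (∇ (dualNorm H) x) x : ℝ) = dualNorm H x := D.dual_euler hx
        rw [real_inner_smul_left, he]
        ring
    have hdivg : finslerLap H (fun y => v y t) x
        = N * ((2*Kc) * v x t) + (2*Kc) * (v x t * (2*Kc) * dualNorm H x ^ 2) := by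
      rw [hstep]
      show (∑ i : Fin N, fderiv ℝ (fun y => ((2*Kc) * v y t) • y) x
        (EuclideanSpace.single i 1) i) = _
      rw [hDF.fderiv]
      have hcoord : ∀ i : Fin N,
          ((((2*Kc) * v x t) • ContinuousLinearMap.id ℝ (EuclideanSpace ℝ (Fin N))
            + ((2*Kc) • (toDual ℝ (EuclideanSpace ℝ (Fin N))
                ((v x t * (2*Kc) * dualNorm H x) • ∇ (dualNorm H) x))).smulRight x)
            (EuclideanSpace.single i 1)) i
          = (2*Kc) * v x t
            + (2*Kc) * (((v x t * (2*Kc) * dualNorm H x) • ∇ (dualNorm H) x) i * x i) := by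
        intro i
        simp only [ContinuousLinearMap.add_apply, ContinuousLinearMap.coe_smul',
          Pi.smul_apply, ContinuousLinearMap.id_apply, ContinuousLinearMap.smulRight_apply,
          PiLp.add_apply, PiLp.smul_apply, smul_eq_mul, toDual_apply_apply,
          EuclideanSpace.inner_single_right, EuclideanSpace.single_apply]
        simp
        ring
      rw [Finset.sum_congr rfl fun i _ => hcoord i]
      rw [Finset.sum_add_distrib, Finset.sum_const, Finset.card_univ, Fintype.card_fin,
        ← Finset.mul_sum]
      have hsum : (∑ i : Fin N, ((v x t * (2*Kc) * dualNorm H x) • ∇ (dualNorm H) x) i * x i)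
          = (inner ℝ ((v x t * (2*Kc) * dualNorm H x) • ∇ (dualNorm H) x) x : ℝ) := by
        rw [PiLp.inner_apply]
        simp [RCLike.inner_apply]
        refine Finset.sum_congr rfl fun i _ => ?_; ring
      rw [hsum, hGx, nsmul_eq_mul]
    rw [hdivg]
    -- time derivative
    have hfx : (fun s => v x s) = (fun s : ℝ => (1 - 4 * Λ * s) ^ (-(N : ℝ) / 2)
        * Real.exp (Λ * (dualNorm H x) ^ 2 / (1 - 4 * Λ * s))) := funext fun τ => hv x τ
    rw [hfx]
    have hu : HasDerivAt (fun τ : ℝ => 1 - 4*Λ*τ) (-(4*Λ)) t := by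
      simpa using ((hasDerivAt_id t).const_mul (4*Λ)).const_sub 1
    have h1 : HasDerivAt (fun τ : ℝ => (1 - 4*Λ*τ) ^ (-(N:ℝ)/2))
        ((-(N:ℝ)/2) * (1 - 4*Λ*t) ^ ((-(N:ℝ)/2) - 1) * (-(4*Λ))) t := by
      have hb : HasDerivAt (fun z : ℝ => z ^ (-(N:ℝ)/2))
          ((-(N:ℝ)/2) * (1 - 4*Λ*t) ^ ((-(N:ℝ)/2)-1)) (1 - 4*Λ*t) :=
        Real.hasDerivAt_rpow_const (Or.inl hsne)
      exact hb.comp t hu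
    have h2 : HasDerivAt (fun τ : ℝ => Λ * (dualNorm H x) ^ 2 / (1 - 4*Λ*τ))
        ((0 * (1 - 4*Λ*t) - Λ * (dualNorm H x) ^ 2 * (-(4*Λ))) / (1 - 4*Λ*t) ^ 2) t :=
      (hasDerivAt_const t (Λ * (dualNorm H x) ^ 2)).div hu hsne
    have h3 := h2.exp
    have h4 := h1.mul h3
    rw [(show HasDerivAt (fun τ => (1 - 4*Λ*τ) ^ (-(N:ℝ)/2)
      * Real.exp (Λ * (dualNorm H x) ^ 2 / (1 - 4*Λ*τ))) _ t from h4).deriv]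
    -- final algebra
    rw [hv x t, hKc, Real.rpow_sub_one hsne]
    field_simp
    ring
end

section
/- Let m > 1, C > 0, and set α := N/(N(m−1)+2), β := α/N, k := α(m−1)/(2mN). Then the Finsler Barenblatt function 𝒰(x,t) := t^{−α}(C − k H₀(x)² t^{−2β})₊^{1/(m−1)} is a solution of the Finsler porous medium equation ∂_t v = Δ_H(v^m) in ℝ^N × (0,∞) (in the distributional/weak sense, and classically on the open set where C − kH₀(x)²t^{−2β} > 0). -/
open MeasureTheory Real Filter


lemma touch_gradient {N : ℕ} {f : EuclideanSpace ℝ (Fin N) → ℝ} {g x : EuclideanSpace ℝ (Fin N)}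
    (hle : ∀ y, (inner ℝ y g : ℝ) ≤ f y) (heq : (inner ℝ x g : ℝ) = f x)
    (hd : DifferentiableAt ℝ f x) : HasGradientAt f g x := by
  have key : ∀ v : EuclideanSpace ℝ (Fin N), fderiv ℝ f x v = (inner ℝ g v : ℝ) := by
    intro v
    have hline : HasDerivAt (fun s : ℝ => x + s • v) v 0 := by
      simpa using ((hasDerivAt_id (0:ℝ)).smul_const v).const_add x
    have hF : HasFDerivAt f (fderiv ℝ f x) ((fun s : ℝ => x + s • v) 0) := by
      simpa using hd.hasFDerivAt
    have hcomp : HasDerivAt (fun s : ℝ => f (x + s • v)) (fderiv ℝ f x v) 0 :=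
      hF.comp_hasDerivAt 0 hline
    set c : ℝ := (inner ℝ v g : ℝ) with hc
    have hφ : HasDerivAt (fun s : ℝ => f (x + s • v) - s * c)
        (fderiv ℝ f x v - c) 0 := by
      exact hcomp.sub (hasDerivAt_mul_const c)
    have hmin : IsLocalMin (fun s : ℝ => f (x + s • v) - s * c) 0 := by
      apply Filter.Eventually.of_forall
      intro s
      have h1 : (inner ℝ (x + s • v) g : ℝ) ≤ f (x + s • v) := hle _
      have h2 : (inner ℝ (x + s • v) g : ℝ) = (inner ℝ x g : ℝ) + s * c := by
        rw [inner_add_left, real_inner_smul_left]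
      simp only [zero_smul, add_zero, zero_mul, sub_zero]
      linarith [h1, h2, heq.ge, heq.le]
    have hz := hmin.deriv_eq_zero
    rw [hφ.deriv] at hz
    have : fderiv ℝ f x v = c := by linarith
    rw [this, hc, real_inner_comm]
  have : fderiv ℝ f x = InnerProductSpace.toDual ℝ _ g := by
    ext v
    rw [key v]
    simp [InnerProductSpace.toDual_apply_apply]
  have h2 : HasFDerivAt f (InnerProductSpace.toDual ℝ _ g) x := this ▸ hd.hasFDerivAt
  exact (hasGradientAt_iff_hasFDerivAt).mpr h2

variable {N : ℕ} {H : EuclideanSpace ℝ (Fin N) → ℝ}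


lemma norm_lb (hHz : ∀ ξ, H ξ = 0 ↔ ξ = 0) (hhom : ∀ (a : ℝ) ξ, H (a • ξ) = |a| * H ξ)
    (hC1 : ContDiffOn ℝ 1 H {ξ | ξ ≠ 0}) (hex : ∃ z : EuclideanSpace ℝ (Fin N), z ≠ 0)
    (hH0 : ∀ ξ, 0 ≤ H ξ) :
    ∃ c > 0, ∀ ξ : EuclideanSpace ℝ (Fin N), c * ‖ξ‖ ≤ H ξ := by
  obtain ⟨z, hz⟩ := hex
  have hsph : (Metric.sphere (0:EuclideanSpace ℝ (Fin N)) 1).Nonempty :=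
    ⟨‖z‖⁻¹ • z, by simp [norm_smul, inv_mul_cancel₀ (norm_ne_zero_iff.2 hz)]⟩
  have hsub : Metric.sphere (0:EuclideanSpace ℝ (Fin N)) 1 ⊆ {ξ | ξ ≠ 0} := by
    intro ξ hξ
    simp only [Metric.mem_sphere, dist_zero_right] at hξ
    intro h
    rw [h] at hξ
    norm_num at hξ
  obtain ⟨ξ₀, hξ₀s, hmin⟩ := (isCompact_sphere (0:EuclideanSpace ℝ (Fin N)) 1).exists_isMinOn
    hsph (hC1.continuousOn.mono hsub)
  have hξ₀ : ξ₀ ≠ 0 := hsub hξ₀s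
  refine ⟨H ξ₀, lt_of_le_of_ne (hH0 _) (fun h => hξ₀ ((hHz _).1 h.symm)), ?_⟩
  intro ξ
  rcases eq_or_ne ξ 0 with rfl | hξ
  · simp [hH0]
  · have hn : ‖ξ‖ ≠ 0 := norm_ne_zero_iff.2 hξ
    have hmem : ‖ξ‖⁻¹ • ξ ∈ Metric.sphere (0:EuclideanSpace ℝ (Fin N)) 1 := by
      simp [norm_smul, inv_mul_cancel₀ hn]
    have h1 : H ξ₀ ≤ H (‖ξ‖⁻¹ • ξ) := hmin hmem
    have h2 : H ξ = ‖ξ‖ * H (‖ξ‖⁻¹ • ξ) := by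
      have := hhom ‖ξ‖ (‖ξ‖⁻¹ • ξ)
      rwa [smul_smul, mul_inv_cancel₀ hn, one_smul, abs_norm] at this
    rw [h2]
    calc H ξ₀ * ‖ξ‖ ≤ H (‖ξ‖⁻¹ • ξ) * ‖ξ‖ := by
          exact mul_le_mul_of_nonneg_right h1 (norm_nonneg _)
      _ = ‖ξ‖ * H (‖ξ‖⁻¹ • ξ) := mul_comm _ _

lemma term_le {c : ℝ} (hc : 0 < c) (hlb : ∀ ξ : EuclideanSpace ℝ (Fin N), c * ‖ξ‖ ≤ H ξ)
    (hHz : ∀ ξ, H ξ = 0 ↔ ξ = 0) (hH0 : ∀ ξ, 0 ≤ H ξ)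
    (x : EuclideanSpace ℝ (Fin N)) {η : EuclideanSpace ℝ (Fin N)} (hη : η ≠ 0) :
    (inner ℝ x η : ℝ) / H η ≤ ‖x‖ / c := by
  have hHη : 0 < H η := lt_of_le_of_ne (hH0 _) (fun h => hη ((hHz _).1 h.symm))
  rw [div_le_div_iff₀ hHη hc]
  calc (inner ℝ x η : ℝ) * c ≤ ‖x‖ * ‖η‖ * c :=
        mul_le_mul_of_nonneg_right (real_inner_le_norm x η) hc.le
    _ = ‖x‖ * (c * ‖η‖) := by ring
    _ ≤ ‖x‖ * H η := by
        exact mul_le_mul_of_nonneg_left (hlb η) (norm_nonneg _)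

lemma dual_bdd {c : ℝ} (hc : 0 < c) (hlb : ∀ ξ : EuclideanSpace ℝ (Fin N), c * ‖ξ‖ ≤ H ξ)
    (hHz : ∀ ξ, H ξ = 0 ↔ ξ = 0) (hH0 : ∀ ξ, 0 ≤ H ξ) (x : EuclideanSpace ℝ (Fin N)) :
    BddAbove (Set.range fun ξ : {ξ : EuclideanSpace ℝ (Fin N) // ξ ≠ 0} =>
      (inner ℝ x ξ.1 : ℝ) / H ξ.1) := by
  refine ⟨‖x‖ / c, ?_⟩
  rintro _ ⟨ξ, rfl⟩
  exact term_le hc hlb hHz hH0 x ξ.2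

lemma term_scale (hhom : ∀ (a : ℝ) ξ, H (a • ξ) = |a| * H ξ)
    (x : EuclideanSpace ℝ (Fin N)) {a : ℝ} (ha : 0 < a) (η : EuclideanSpace ℝ (Fin N)) :
    (inner ℝ x (a • η) : ℝ) / H (a • η) = (inner ℝ x η : ℝ) / H η := by
  rw [real_inner_smul_right, hhom, abs_of_pos ha, mul_div_mul_left _ _ ha.ne']

lemma dual_maximizer (hHz : ∀ ξ, H ξ = 0 ↔ ξ = 0) (hhom : ∀ (a : ℝ) ξ, H (a • ξ) = |a| * H ξ)
    (hC1 : ContDiffOn ℝ 1 H {ξ | ξ ≠ 0}) (hH0 : ∀ ξ, 0 ≤ H ξ)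
    {x : EuclideanSpace ℝ (Fin N)} (hx : x ≠ 0) :
    ∃ ξ : EuclideanSpace ℝ (Fin N), H ξ = 1 ∧ (inner ℝ x ξ : ℝ) = dualNorm H x ∧
      ∀ y, (inner ℝ y ξ : ℝ) ≤ dualNorm H y := by
  obtain ⟨c, hc, hlb⟩ := norm_lb hHz hhom hC1 ⟨x, hx⟩ hH0
  have hsub : Metric.sphere (0:EuclideanSpace ℝ (Fin N)) 1 ⊆ {ξ | ξ ≠ 0} := by
    intro ξ hξ
    simp only [Metric.mem_sphere, dist_zero_right] at hξ
    intro h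
    rw [h] at hξ
    norm_num at hξ
  have hsph : (Metric.sphere (0:EuclideanSpace ℝ (Fin N)) 1).Nonempty :=
    ⟨‖x‖⁻¹ • x, by simp [norm_smul, inv_mul_cancel₀ (norm_ne_zero_iff.2 hx)]⟩
  have hcont : ContinuousOn (fun η : EuclideanSpace ℝ (Fin N) => (inner ℝ x η : ℝ) / H η)
      (Metric.sphere (0:EuclideanSpace ℝ (Fin N)) 1) := by
    apply ContinuousOn.div
    · exact (continuous_const.inner continuous_id).continuousOn
    · exact hC1.continuousOn.mono hsub
    · intro η hη
      exact fun h => (hsub hη) ((hHz _).1 h)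
  obtain ⟨ξ₀, hξ₀s, hmax⟩ := (isCompact_sphere (0:EuclideanSpace ℝ (Fin N)) 1).exists_isMaxOn
    hsph hcont
  have hξ₀ : ξ₀ ≠ 0 := hsub hξ₀s
  have hHξ₀ : 0 < H ξ₀ := lt_of_le_of_ne (hH0 _) (fun h => hξ₀ ((hHz _).1 h.symm))
  -- the max over the sphere dominates every nonzero vector's ratio, for every base point y
  have hdom : ∀ (y : EuclideanSpace ℝ (Fin N)) (η : EuclideanSpace ℝ (Fin N)), η ≠ 0 →
      (inner ℝ y η : ℝ) / H η ≤ ⨆ ζ : {ζ : EuclideanSpace ℝ (Fin N) // ζ ≠ 0},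
        (inner ℝ y ζ.1 : ℝ) / H ζ.1 := by
    intro y η hη
    exact le_ciSup (dual_bdd hc hlb hHz hH0 y) ⟨η, hη⟩
  have hmax' : ∀ η : EuclideanSpace ℝ (Fin N), η ≠ 0 →
      (inner ℝ x η : ℝ) / H η ≤ (inner ℝ x ξ₀ : ℝ) / H ξ₀ := by
    intro η hη
    have hn : ‖η‖ ≠ 0 := norm_ne_zero_iff.2 hη
    have hmem : ‖η‖⁻¹ • η ∈ Metric.sphere (0:EuclideanSpace ℝ (Fin N)) 1 := by
      simp [norm_smul, inv_mul_cancel₀ hn]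
    have h := hmax hmem
    simp only [Set.mem_setOf_eq] at h
    rwa [term_scale hhom x (by positivity : (0:ℝ) < ‖η‖⁻¹) η] at h
  have hdx : dualNorm H x = (inner ℝ x ξ₀ : ℝ) / H ξ₀ := by
    apply le_antisymm
    · have : Nonempty {ζ : EuclideanSpace ℝ (Fin N) // ζ ≠ 0} := ⟨⟨x, hx⟩⟩
      exact ciSup_le fun η => hmax' η.1 η.2
    · exact hdom x ξ₀ hξ₀
  refine ⟨(H ξ₀)⁻¹ • ξ₀, ?_, ?_, ?_⟩
  · rw [hhom, abs_of_pos (by positivity), inv_mul_cancel₀ hHξ₀.ne']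
  · rw [real_inner_smul_right, hdx]
    ring
  · intro y
    rcases eq_or_ne y 0 with rfl | hy
    · have hz : dualNorm H (0 : EuclideanSpace ℝ (Fin N)) = 0 := by
        have : Nonempty {ξ : EuclideanSpace ℝ (Fin N) // ξ ≠ 0} := ⟨⟨x, hx⟩⟩
        unfold dualNorm
        simp [inner_zero_left]
      rw [hz, inner_zero_left]
    · have h1 := hdom y ((H ξ₀)⁻¹ • ξ₀) (by
        intro h
        apply hξ₀
        have := congrArg (fun z => H ξ₀ • z) h
        simpa [smul_smul, mul_inv_cancel₀ hHξ₀.ne'] using this)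
      have h2 : H ((H ξ₀)⁻¹ • ξ₀) = 1 := by
        rw [hhom, abs_of_pos (by positivity), inv_mul_cancel₀ hHξ₀.ne']
      calc (inner ℝ y ((H ξ₀)⁻¹ • ξ₀) : ℝ)
          = (inner ℝ y ((H ξ₀)⁻¹ • ξ₀) : ℝ) / H ((H ξ₀)⁻¹ • ξ₀) := by rw [h2, div_one]
        _ ≤ dualNorm H y := h1

lemma dual_zero (hex : ∃ z : EuclideanSpace ℝ (Fin N), z ≠ 0) :
    dualNorm H 0 = 0 := by
  have : Nonempty {ξ : EuclideanSpace ℝ (Fin N) // ξ ≠ 0} := ⟨⟨hex.choose, hex.choose_spec⟩⟩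
  unfold dualNorm
  simp [inner_zero_left]

lemma dual_pos (hHz : ∀ ξ, H ξ = 0 ↔ ξ = 0) (hhom : ∀ (a : ℝ) ξ, H (a • ξ) = |a| * H ξ)
    (hC1 : ContDiffOn ℝ 1 H {ξ | ξ ≠ 0}) (hH0 : ∀ ξ, 0 ≤ H ξ)
    {x : EuclideanSpace ℝ (Fin N)} (hx : x ≠ 0) : 0 < dualNorm H x := by
  obtain ⟨c, hc, hlb⟩ := norm_lb hHz hhom hC1 ⟨x, hx⟩ hH0
  have hHx : 0 < H x := lt_of_le_of_ne (hH0 _) (fun h => hx ((hHz _).1 h.symm))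
  have h1 : (inner ℝ x x : ℝ) / H x ≤ dualNorm H x := le_ciSup (dual_bdd hc hlb hHz hH0 x) ⟨x, hx⟩
  have h2 : 0 < (inner ℝ x x : ℝ) / H x := by
    apply div_pos _ hHx
    rw [real_inner_self_eq_norm_sq]
    have : 0 < ‖x‖ := norm_pos_iff.2 hx
    positivity
  linarith

lemma dual_ineq (hHz : ∀ ξ, H ξ = 0 ↔ ξ = 0) (hhom : ∀ (a : ℝ) ξ, H (a • ξ) = |a| * H ξ)
    (hC1 : ContDiffOn ℝ 1 H {ξ | ξ ≠ 0}) (hH0 : ∀ ξ, 0 ≤ H ξ)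
    (hex : ∃ z : EuclideanSpace ℝ (Fin N), z ≠ 0)
    (x η : EuclideanSpace ℝ (Fin N)) : (inner ℝ x η : ℝ) ≤ dualNorm H x * H η := by
  obtain ⟨c, hc, hlb⟩ := norm_lb hHz hhom hC1 hex hH0
  rcases eq_or_ne η 0 with rfl | hη
  · simp [inner_zero_right, (hHz 0).2 rfl]
  · have hHη : 0 < H η := lt_of_le_of_ne (hH0 _) (fun h => hη ((hHz _).1 h.symm))
    have h1 : (inner ℝ x η : ℝ) / H η ≤ dualNorm H x := le_ciSup (dual_bdd hc hlb hHz hH0 x) ⟨η, hη⟩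
    calc (inner ℝ x η : ℝ) = ((inner ℝ x η : ℝ) / H η) * H η := by field_simp
      _ ≤ dualNorm H x * H η := mul_le_mul_of_nonneg_right h1 hHη.le

lemma diff_of_C1 {f : EuclideanSpace ℝ (Fin N) → ℝ} (hf : ContDiffOn ℝ 1 f {ξ | ξ ≠ 0})
    {x : EuclideanSpace ℝ (Fin N)} (hx : x ≠ 0) : DifferentiableAt ℝ f x := by
  have hopen : IsOpen {ξ : EuclideanSpace ℝ (Fin N) | ξ ≠ 0} := isOpen_ne
  exact (hf.contDiffAt (hopen.mem_nhds hx)).differentiableAt one_ne_zero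

lemma grad_neg_scale (hhom : ∀ (a : ℝ) ξ, H (a • ξ) = |a| * H ξ)
    {g ξ : EuclideanSpace ℝ (Fin N)} {c : ℝ} (hc : c < 0)
    (hg : HasGradientAt H g ξ) : HasGradientAt H (-g) (c • ξ) := by
  have hinner : HasFDerivAt (fun η : EuclideanSpace ℝ (Fin N) => c⁻¹ • η)
      (c⁻¹ • ContinuousLinearMap.id ℝ (EuclideanSpace ℝ (Fin N))) (c • ξ) :=
    (hasFDerivAt_id _).const_smul c⁻¹
  have hpt : (fun η : EuclideanSpace ℝ (Fin N) => c⁻¹ • η) (c • ξ) = ξ := by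
    simp [smul_smul, inv_mul_cancel₀ hc.ne]
  have hcomp := (hpt ▸ hg.hasFDerivAt).comp (c • ξ) hinner
  have hK := hcomp.const_mul (-c)
  have heq : (fun η => (-c) * H (c⁻¹ • η)) = H := by
    funext η
    rw [hhom, abs_of_neg (inv_neg''.2 hc)]
    field_simp
    exact mul_div_cancel_left₀ _ hc.ne
  rw [show (fun η => (-c) * (H ∘ fun η : EuclideanSpace ℝ (Fin N) => c⁻¹ • η) η) =
    (fun η => (-c) * H (c⁻¹ • η)) from rfl, heq] at hK
  have hD : (-c) • ((InnerProductSpace.toDual ℝ (EuclideanSpace ℝ (Fin N)) g).comp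
      (c⁻¹ • ContinuousLinearMap.id ℝ (EuclideanSpace ℝ (Fin N))))
      = InnerProductSpace.toDual ℝ (EuclideanSpace ℝ (Fin N)) (-g) := by
    ext v
    simp [InnerProductSpace.toDual_apply_apply, real_inner_smul_right, inner_neg_left]
    field_simp
    exact mul_div_cancel_left₀ _ hc.ne
  rw [hasGradientAt_iff_hasFDerivAt, ← hD]
  exact hK

lemma grad_dual (hHz : ∀ ξ, H ξ = 0 ↔ ξ = 0) (hhom : ∀ (a : ℝ) ξ, H (a • ξ) = |a| * H ξ)
    (hC1 : ContDiffOn ℝ 1 H {ξ | ξ ≠ 0}) (hH0 : ∀ ξ, 0 ≤ H ξ)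
    (hC1dual : ContDiffOn ℝ 1 (dualNorm H) {x | x ≠ 0})
    {x : EuclideanSpace ℝ (Fin N)} (hx : x ≠ 0) :
    ∃ w : EuclideanSpace ℝ (Fin N),
      HasGradientAt (dualNorm H) w x ∧ H w = 1 ∧ (inner ℝ x w : ℝ) = dualNorm H x ∧
      HasGradientAt H ((dualNorm H x)⁻¹ • x) w := by
  obtain ⟨ξ, hξ1, hξ2, hξ3⟩ := dual_maximizer hHz hhom hC1 hH0 hx
  have hdx : 0 < dualNorm H x := dual_pos hHz hhom hC1 hH0 hx
  have hgd : HasGradientAt (dualNorm H) ξ x :=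
    touch_gradient (fun y => hξ3 y) hξ2 (diff_of_C1 hC1dual hx)
  have hξ0 : ξ ≠ 0 := by
    intro h
    rw [h, (hHz 0).2 rfl] at hξ1
    norm_num at hξ1
  have hgH : HasGradientAt H ((dualNorm H x)⁻¹ • x) ξ := by
    apply touch_gradient
    · intro η
      have h := dual_ineq hHz hhom hC1 hH0 ⟨x, hx⟩ x η
      rw [real_inner_smul_right, real_inner_comm]
      rw [inv_mul_le_iff₀ hdx]
      linarith [h]
    · rw [real_inner_smul_right, real_inner_comm x ξ, hξ2, inv_mul_cancel₀ hdx.ne', hξ1]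
    · exact diff_of_C1 hC1 hξ0
  exact ⟨ξ, hgd, hξ1, hξ2, hgH⟩

lemma dual_nonneg (hHz : ∀ ξ, H ξ = 0 ↔ ξ = 0) (hhom : ∀ (a : ℝ) ξ, H (a • ξ) = |a| * H ξ)
    (hC1 : ContDiffOn ℝ 1 H {ξ | ξ ≠ 0}) (hH0 : ∀ ξ, 0 ≤ H ξ)
    (hex : ∃ z : EuclideanSpace ℝ (Fin N), z ≠ 0) (y : EuclideanSpace ℝ (Fin N)) :
    0 ≤ dualNorm H y := by
  rcases eq_or_ne y 0 with rfl | hy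
  · rw [dual_zero hex]
  · exact (dual_pos hHz hhom hC1 hH0 hy).le

lemma q_grad_ne (hHz : ∀ ξ, H ξ = 0 ↔ ξ = 0) (hhom : ∀ (a : ℝ) ξ, H (a • ξ) = |a| * H ξ)
    (hC1 : ContDiffOn ℝ 1 H {ξ | ξ ≠ 0}) (hH0 : ∀ ξ, 0 ≤ H ξ)
    (hC1dual : ContDiffOn ℝ 1 (dualNorm H) {x | x ≠ 0})
    {y : EuclideanSpace ℝ (Fin N)} (hy : y ≠ 0) :
    ∃ w : EuclideanSpace ℝ (Fin N),
      HasGradientAt (fun z => (dualNorm H z)^2) ((2 * dualNorm H y) • w) y ∧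
      H w = 1 ∧ (inner ℝ y w : ℝ) = dualNorm H y ∧
      HasGradientAt H ((dualNorm H y)⁻¹ • y) w := by
  obtain ⟨w, hw, hw1, hw2, hw3⟩ := grad_dual hHz hhom hC1 hH0 hC1dual hy
  refine ⟨w, ?_, hw1, hw2, hw3⟩
  have hd2 : HasDerivAt (fun r : ℝ => r^2) (2 * dualNorm H y) (dualNorm H y) := by
    simpa using hasDerivAt_pow 2 (dualNorm H y)
  have hF := hd2.comp_hasFDerivAt y hw.hasFDerivAt
  rw [hasGradientAt_iff_hasFDerivAt]
  have hsm : (2 * dualNorm H y) • (InnerProductSpace.toDual ℝ (EuclideanSpace ℝ (Fin N)) w)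
      = InnerProductSpace.toDual ℝ (EuclideanSpace ℝ (Fin N)) ((2 * dualNorm H y) • w) := by
    rw [_root_.map_smul]
  rw [← hsm]
  exact hF

lemma q_grad_zero (hHz : ∀ ξ, H ξ = 0 ↔ ξ = 0) (hhom : ∀ (a : ℝ) ξ, H (a • ξ) = |a| * H ξ)
    (hC1 : ContDiffOn ℝ 1 H {ξ | ξ ≠ 0}) (hH0 : ∀ ξ, 0 ≤ H ξ)
    (hex : ∃ z : EuclideanSpace ℝ (Fin N), z ≠ 0) :
    HasGradientAt (fun z => (dualNorm H z)^2) 0 (0 : EuclideanSpace ℝ (Fin N)) := by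
  obtain ⟨c, hc, hlb⟩ := norm_lb hHz hhom hC1 hex hH0
  have hle : ∀ y : EuclideanSpace ℝ (Fin N), dualNorm H y ≤ ‖y‖ / c := by
    intro y
    have : Nonempty {ξ : EuclideanSpace ℝ (Fin N) // ξ ≠ 0} := ⟨⟨hex.choose, hex.choose_spec⟩⟩
    exact ciSup_le fun η => term_le hc hlb hHz hH0 y η.2
  rw [hasGradientAt_iff_hasFDerivAt, _root_.map_zero]
  rw [hasFDerivAt_iff_isLittleO_nhds_zero]
  have h1 : (fun h : EuclideanSpace ℝ (Fin N) => (dualNorm H (0 + h))^2 - (dualNorm H 0)^2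
      - (0 : EuclideanSpace ℝ (Fin N) →L[ℝ] ℝ) h)
      =O[nhds 0] (fun h : EuclideanSpace ℝ (Fin N) => ‖h‖^2) := by
    apply Asymptotics.IsBigO.of_bound (c⁻¹^2)
    apply Filter.Eventually.of_forall
    intro y
    have h2 := hle y
    have h3 := dual_nonneg hHz hhom hC1 hH0 hex y
    simp only [zero_add, dual_zero hex, ContinuousLinearMap.zero_apply, sub_zero]
    rw [show (0:ℝ)^2 = 0 by norm_num, sub_zero]
    rw [Real.norm_eq_abs, abs_of_nonneg (by positivity)]
    have h4 : dualNorm H y ^ 2 ≤ (‖y‖/c)^2 := by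
      apply pow_le_pow_left₀ h3 h2
    calc dualNorm H y ^ 2 ≤ (‖y‖/c)^2 := h4
      _ = c⁻¹^2 * ‖y‖^2 := by ring
      _ = c⁻¹^2 * ‖(‖y‖^2)‖ := by rw [Real.norm_eq_abs, abs_of_nonneg (by positivity)]
  have h2 : (fun h : EuclideanSpace ℝ (Fin N) => ‖h‖^2) =o[nhds 0]
      (fun h : EuclideanSpace ℝ (Fin N) => h) :=
    Asymptotics.isLittleO_norm_pow_id (by norm_num)
  exact h1.trans_isLittleO h2


lemma outer_hasDerivAt {CC kk ee c₀ r : ℝ} (hr : 0 < CC - kk*r) :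
    HasDerivAt (fun p : ℝ => c₀ * (CC - kk*p)^ee) (c₀*ee*(CC-kk*r)^(ee-1)*(-kk)) r := by
  have h1 : HasDerivAt (fun p:ℝ => CC - kk*p) (-kk) r := by
    simpa using ((hasDerivAt_id r).const_mul kk).const_sub CC
  have h2 : HasDerivAt (fun z:ℝ => z^ee) (ee*(CC-kk*r)^(ee-1)) (CC-kk*r) :=
    Real.hasDerivAt_rpow_const (Or.inl hr.ne')
  have h3 := (h2.comp r h1).const_mul c₀
  exact h3.congr_deriv (by ring)

lemma comp_grad {N : ℕ} {q : EuclideanSpace ℝ (Fin N) → ℝ} {D y : EuclideanSpace ℝ (Fin N)}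
    (hq : HasGradientAt q D y) {φ : ℝ → ℝ} {d : ℝ} (hφ : HasDerivAt φ d (q y)) :
    HasGradientAt (fun z => φ (q z)) (d • D) y := by
  have h := hφ.comp_hasFDerivAt y hq.hasFDerivAt
  rw [hasGradientAt_iff_hasFDerivAt]
  have h2 : d • (InnerProductSpace.toDual ℝ (EuclideanSpace ℝ (Fin N)) D)
      = InnerProductSpace.toDual ℝ (EuclideanSpace ℝ (Fin N)) (d • D) := by rw [_root_.map_smul]
  rw [← h2]
  exact h

lemma clm_sum {N : ℕ} (L : EuclideanSpace ℝ (Fin N) →L[ℝ] ℝ) (x : EuclideanSpace ℝ (Fin N)) :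
    ∑ i, L (EuclideanSpace.single i 1) * x i = L x := by
  have hx : x = ∑ i, x i • EuclideanSpace.single i (1:ℝ) := by
    have h := (EuclideanSpace.basisFun (Fin N) ℝ).sum_repr x
    simp only [EuclideanSpace.basisFun_repr, EuclideanSpace.basisFun_apply] at h
    exact h.symm
  conv_rhs => rw [hx]
  rw [_root_.map_sum]
  congr 1
  funext i
  rw [_root_.map_smul]
  simp [mul_comm]

lemma rhs_calc {N : ℕ} {H : EuclideanSpace ℝ (Fin N) → ℝ}
    (hHz : ∀ ξ, H ξ = 0 ↔ ξ = 0) (hhom : ∀ (a : ℝ) ξ, H (a • ξ) = |a| * H ξ)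
    (hC1 : ContDiffOn ℝ 1 H {ξ | ξ ≠ 0}) (hH0 : ∀ ξ, 0 ≤ H ξ)
    (hC1dual : ContDiffOn ℝ 1 (dualNorm H) {x | x ≠ 0})
    (hex : ∃ z : EuclideanSpace ℝ (Fin N), z ≠ 0)
    {u : EuclideanSpace ℝ (Fin N) → ℝ} {kk ee c₁ CC : ℝ}
    (hkk : 0 < kk) (hee : 0 < ee) (hc₁ : 0 < c₁) {x : EuclideanSpace ℝ (Fin N)}
    (hu : ∀ y, 0 < CC - kk * (dualNorm H y)^2 →
      u y = c₁ * (CC - kk * (dualNorm H y)^2)^(ee+1))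
    (hx : 0 < CC - kk * (dualNorm H x)^2) :
    finslerLap H u x = -2*c₁*(ee+1)*kk*((N:ℝ)*(CC - kk*(dualNorm H x)^2)^ee
      - 2*ee*kk*(CC - kk*(dualNorm H x)^2)^(ee-1)*(dualNorm H x)^2) := by
  set q : EuclideanSpace ℝ (Fin N) → ℝ := fun y => (dualNorm H y)^2 with hqdef
  -- gradient of q at every point
  have hqgrad : ∀ y : EuclideanSpace ℝ (Fin N), ∃ D, HasGradientAt q D y ∧
      (inner ℝ D y : ℝ) = 2 * q y := by
    intro y
    rcases eq_or_ne y 0 with rfl | hy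
    · exact ⟨0, q_grad_zero hHz hhom hC1 hH0 hex, by simp [hqdef, dual_zero hex]⟩
    · obtain ⟨w, hw, hw1, hw2, hw3⟩ := q_grad_ne hHz hhom hC1 hH0 hC1dual hy
      refine ⟨(2 * dualNorm H y) • w, hw, ?_⟩
      have h5 : (inner ℝ w y : ℝ) = dualNorm H y := by rw [real_inner_comm]; exact hw2
      rw [real_inner_smul_left, h5]
      have h6 : q y = dualNorm H y ^ 2 := rfl
      rw [h6]
      ring
  have hqc : Continuous q := by
    rw [continuous_iff_continuousAt]
    intro y
    obtain ⟨D, hD, -⟩ := hqgrad y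
    exact hD.differentiableAt.continuousAt
  have hVopen : IsOpen {y : EuclideanSpace ℝ (Fin N) | 0 < CC - kk * q y} :=
    isOpen_lt continuous_const (continuous_const.sub ((continuous_const.mul hqc)))
  have hxV : x ∈ {y : EuclideanSpace ℝ (Fin N) | 0 < CC - kk * q y} := hx
  -- the scalar field
  set sc : EuclideanSpace ℝ (Fin N) → ℝ := fun y => -(c₁*(ee+1)*kk*(CC - kk*q y)^ee) with hscdef
  -- gradient of u on V
  have hugrad : ∀ y ∈ {y : EuclideanSpace ℝ (Fin N) | 0 < CC - kk * q y},
      ∀ D, HasGradientAt q D y → gradient u y = sc y • D := by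
    intro y hy D hD
    have hev : u =ᶠ[nhds y] (fun z => c₁ * (CC - kk*q z)^(ee+1)) := by
      filter_upwards [hVopen.mem_nhds hy] with z hz
      exact hu z hz
    have hφ : HasDerivAt (fun p : ℝ => c₁ * (CC - kk*p)^(ee+1)) (sc y) (q y) := by
      have h := outer_hasDerivAt (CC := CC) (kk := kk) (ee := ee+1) (c₀ := c₁) (r := q y) hy
      rw [show ee + 1 - 1 = ee by ring] at h
      convert h using 1
      rw [hscdef]
      ring
    have hg : HasGradientAt (fun z => c₁ * (CC - kk*q z)^(ee+1)) (sc y • D) y :=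
      comp_grad hD hφ
    have : gradient u y = gradient (fun z => c₁ * (CC - kk*q z)^(ee+1)) y := by
      unfold gradient
      rw [hev.fderiv_eq]
    rw [this, hg.gradient]
  -- pointwise formula for the vector field on V
  have hFG : ∀ y ∈ {y : EuclideanSpace ℝ (Fin N) | 0 < CC - kk * q y},
      H (gradient u y) • gradient H (gradient u y) = (2 * sc y) • y := by
    intro y hy
    have hQy : 0 < CC - kk * q y := hy
    have hscneg : sc y < 0 := by
      rw [hscdef]
      simp only [neg_neg, Left.neg_neg_iff]
      have : (0:ℝ) < (CC - kk*q y)^ee := Real.rpow_pos_of_pos hQy _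
      positivity
    rcases eq_or_ne y 0 with rfl | hy0
    · have h0 : gradient u 0 = (0 : EuclideanSpace ℝ (Fin N)) := by
        rw [hugrad 0 hy 0 (q_grad_zero hHz hhom hC1 hH0 hex), smul_zero]
      rw [h0, (hHz 0).2 rfl, zero_smul, smul_zero]
    · obtain ⟨w, hw, hw1, hw2, hw3⟩ := q_grad_ne hHz hhom hC1 hH0 hC1dual hy0
      have hH₀pos : 0 < dualNorm H y := dual_pos hHz hhom hC1 hH0 hy0
      have hgu : gradient u y = (sc y * (2 * dualNorm H y)) • w := by
        rw [hugrad y hy _ hw, smul_smul]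
      have hcneg : sc y * (2 * dualNorm H y) < 0 :=
        mul_neg_of_neg_of_pos hscneg (by positivity)
      have hgH : HasGradientAt H (-((dualNorm H y)⁻¹ • y))
          ((sc y * (2 * dualNorm H y)) • w) := grad_neg_scale hhom hcneg hw3
      have hHval : H ((sc y * (2 * dualNorm H y)) • w)
          = -(sc y * (2 * dualNorm H y)) := by
        rw [hhom, hw1, abs_of_neg hcneg, mul_one]
      rw [hgu, hHval, hgH.gradient]
      have h7 : (-(sc y * (2 * dualNorm H y))) • -((dualNorm H y)⁻¹ • y)
          = ((sc y * (2 * dualNorm H y)) * (dualNorm H y)⁻¹) • y := by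
        rw [smul_neg, neg_smul, neg_neg, smul_smul]
      rw [h7, show sc y * (2 * dualNorm H y) * (dualNorm H y)⁻¹
        = 2 * sc y * ((dualNorm H y) * (dualNorm H y)⁻¹) by ring,
        mul_inv_cancel₀ hH₀pos.ne', mul_one]
  -- differentiate the scalar field
  obtain ⟨Dx, hDx, hDxval⟩ := hqgrad x
  have hφ2 : HasDerivAt (fun p : ℝ => 2 * -(c₁*(ee+1)*kk*(CC - kk*p)^ee))
      ((-(2*c₁*(ee+1)*kk))*ee*(CC-kk*q x)^(ee-1)*(-kk)) (q x) := by
    have heqf : (fun p : ℝ => 2 * -(c₁*(ee+1)*kk*(CC - kk*p)^ee))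
        = fun p : ℝ => (-(2*c₁*(ee+1)*kk))*(CC-kk*p)^ee := by funext p; ring
    rw [heqf]
    exact outer_hasDerivAt hx
  have hσg : HasGradientAt (fun y => 2 * sc y)
      ((((-(2*c₁*(ee+1)*kk))*ee*(CC-kk*q x)^(ee-1)*(-kk))) • Dx) x := comp_grad hDx hφ2
  have hGF : HasFDerivAt (fun y => (2 * sc y) • y)
      ((2 * sc x) • ContinuousLinearMap.id ℝ (EuclideanSpace ℝ (Fin N)) +
        (InnerProductSpace.toDual ℝ (EuclideanSpace ℝ (Fin N))
          ((((-(2*c₁*(ee+1)*kk))*ee*(CC-kk*q x)^(ee-1)*(-kk))) • Dx)).smulRight x) x :=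
    hσg.hasFDerivAt.smul (hasFDerivAt_id x)
  have hFeq : (fun y => H (gradient u y) • gradient H (gradient u y))
      =ᶠ[nhds x] (fun y => (2 * sc y) • y) := by
    filter_upwards [hVopen.mem_nhds hxV] with z hz
    exact hFG z hz
  have hfder : fderiv ℝ (fun y => H (gradient u y) • gradient H (gradient u y)) x
      = (2 * sc x) • ContinuousLinearMap.id ℝ (EuclideanSpace ℝ (Fin N)) +
        (InnerProductSpace.toDual ℝ (EuclideanSpace ℝ (Fin N))
          ((((-(2*c₁*(ee+1)*kk))*ee*(CC-kk*q x)^(ee-1)*(-kk))) • Dx)).smulRight x := by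
    rw [hFeq.fderiv_eq, hGF.fderiv]
  unfold finslerLap divg
  rw [hfder]
  have hterm : ∀ i : Fin N,
      (((2 * sc x) • ContinuousLinearMap.id ℝ (EuclideanSpace ℝ (Fin N)) +
        (InnerProductSpace.toDual ℝ (EuclideanSpace ℝ (Fin N))
          ((((-(2*c₁*(ee+1)*kk))*ee*(CC-kk*q x)^(ee-1)*(-kk))) • Dx)).smulRight x)
        (EuclideanSpace.single i 1)) i
      = 2 * sc x +
        (InnerProductSpace.toDual ℝ (EuclideanSpace ℝ (Fin N))
          ((((-(2*c₁*(ee+1)*kk))*ee*(CC-kk*q x)^(ee-1)*(-kk))) • Dx))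
          (EuclideanSpace.single i 1) * x i := by
    intro i
    simp [EuclideanSpace.single_apply, mul_comm]
  rw [Finset.sum_congr rfl (fun i _ => hterm i), Finset.sum_add_distrib,
    Finset.sum_const, clm_sum]
  rw [InnerProductSpace.toDual_apply_apply, real_inner_smul_left, hDxval]
  have hscx : sc x = -(c₁*(ee+1)*kk*(CC - kk*q x)^ee) := rfl
  have hqx : q x = (dualNorm H x)^2 := rfl
  rw [hscx]
  simp only [Finset.card_univ, Fintype.card_fin, nsmul_eq_mul]
  rw [← hqx]
  ring


theorem stmt_13 {N : ℕ} (H : EuclideanSpace ℝ (Fin N) → ℝ)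
    (hH0 : ∀ ξ, 0 ≤ H ξ) (hHz : ∀ ξ, H ξ = 0 ↔ ξ = 0)
    (hconv : ConvexOn ℝ Set.univ H)
    (hhom : ∀ (a : ℝ) ξ, H (a • ξ) = |a| * H ξ)
    (hC1 : ContDiffOn ℝ 1 H {ξ | ξ ≠ 0})
    (hC1dual : ContDiffOn ℝ 1 (dualNorm H) {x | x ≠ 0})
    (m C : ℝ) (hm : 1 < m) (hC : 0 < C)
    (α β k : ℝ)
    (hα : α = N / (N * (m - 1) + 2)) (hβ : β = α / N)
    (hk : k = α * (m - 1) / (2 * m * N))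
    (U : EuclideanSpace ℝ (Fin N) → ℝ → ℝ)
    (hU : ∀ x t, U x t
      = t ^ (-α) * (max (C - k * (dualNorm H x) ^ 2 * t ^ (-2 * β)) 0) ^ (1 / (m - 1))) :
    ∀ (x : EuclideanSpace ℝ (Fin N)) (t : ℝ), 0 < t →
      0 < C - k * (dualNorm H x) ^ 2 * t ^ (-2 * β) →
      deriv (fun s => U x s) t = finslerLap H (fun y => (U y t) ^ m) x := by
  intro x t ht hpos
  rcases Nat.eq_zero_or_pos N with hN0 | hN
  · -- degenerate case N = 0
    subst hN0
    have hαz : α = 0 := by rw [hα]; norm_num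
    have hkz : k = 0 := by rw [hk, hαz]; ring_nf
    have hUc : (fun s => U x s) = fun _ => C ^ (1/(m-1)) := by
      funext s
      rw [hU, hαz, hkz]
      simp [max_eq_left hC.le]
    rw [hUc, deriv_const]
    unfold finslerLap divg
    simp
  · -- main case
    have hm0 : (0:ℝ) < m := by linarith
    have hm1 : (0:ℝ) < m - 1 := by linarith
    have hm1' : m - 1 ≠ 0 := hm1.ne'
    have hNR : (0:ℝ) < (N:ℝ) := by exact_mod_cast hN
    have hden : (0:ℝ) < (N:ℝ)*(m-1)+2 := by nlinarith
    have hαpos : 0 < α := by rw [hα]; positivity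
    have hβpos : 0 < β := by rw [hβ]; positivity
    have hkpos : 0 < k := by rw [hk]; exact div_pos (mul_pos hαpos hm1) (by positivity)
    have hex : ∃ z : EuclideanSpace ℝ (Fin N), z ≠ 0 := by
      refine ⟨EuclideanSpace.single ⟨0, hN⟩ 1, ?_⟩
      intro h
      have h2 := congrArg norm h
      simp [EuclideanSpace.norm_single] at h2
    have hexp : α*m + 2*β = α + 1 := by
      rw [hβ, hα]
      field_simp
      ring
    have hC1' : 2*(1/(m-1)+1)*k*(N:ℝ) = α := by
      rw [hk]
      field_simp
      ring
    have hC2' : 2*(1/(m-1)+1)*k = β := by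
      rw [hk, hβ]
      field_simp
      ring
    -- positivity data
    have hkkpos : 0 < k * t^(-2*β) := mul_pos hkpos (rpow_pos_of_pos ht _)
    have heepos : 0 < 1/(m-1) := by positivity
    have hc₁pos : 0 < t^(-(α*m)) := rpow_pos_of_pos ht _
    have hx' : 0 < C - (k * t^(-2*β)) * (dualNorm H x)^2 := by
      rw [show C - (k * t^(-2*β)) * (dualNorm H x)^2
        = C - k * (dualNorm H x)^2 * t^(-2*β) by ring]
      exact hpos
    -- RHS via rhs_calc
    have hu : ∀ y, 0 < C - (k * t^(-2*β)) * (dualNorm H y)^2 →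
        (U y t)^m = t^(-(α*m)) * (C - (k * t^(-2*β)) * (dualNorm H y)^2)^(1/(m-1)+1) := by
      intro y hy
      have hy' : 0 < C - k * (dualNorm H y)^2 * t^(-2*β) := by
        rw [show C - k * (dualNorm H y)^2 * t^(-2*β)
          = C - (k * t^(-2*β)) * (dualNorm H y)^2 by ring]
        exact hy
      rw [hU, max_eq_left hy'.le,
        Real.mul_rpow (Real.rpow_nonneg ht.le _) (Real.rpow_nonneg hy'.le _),
        ← Real.rpow_mul ht.le, ← Real.rpow_mul hy'.le,
        show (-α)*m = -(α*m) by ring,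
        show (1/(m-1))*m = 1/(m-1)+1 by field_simp; ring,
        show C - k * dualNorm H y ^2 * t^(-2*β) = C - (k * t^(-2*β)) * dualNorm H y^2 by ring]
    have hRHS := rhs_calc hHz hhom hC1 hH0 hC1dual hex hkkpos heepos hc₁pos hu hx'
    have hfc : ContinuousOn (fun s : ℝ => C - k * (dualNorm H x)^2 * s^(-2*β)) (Set.Ioi 0) := by
      apply continuousOn_const.sub
      apply ContinuousOn.mul continuousOn_const
      exact continuousOn_id.rpow_const (fun s hs => Or.inl (ne_of_gt hs))
    have hWopen : IsOpen (Set.Ioi (0:ℝ) ∩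
        (fun s : ℝ => C - k * (dualNorm H x)^2 * s^(-2*β)) ⁻¹' Set.Ioi 0) :=
      hfc.isOpen_inter_preimage isOpen_Ioi isOpen_Ioi
    have htW : t ∈ Set.Ioi (0:ℝ) ∩
        (fun s : ℝ => C - k * (dualNorm H x)^2 * s^(-2*β)) ⁻¹' Set.Ioi 0 := ⟨ht, hpos⟩
    have hW : (fun s => U x s) =ᶠ[nhds t]
        (fun s => s^(-α) * (C - k * (dualNorm H x)^2 * s^(-2*β))^(1/(m-1))) := by
      filter_upwards [hWopen.mem_nhds htW] with s hs
      rw [hU, max_eq_left (le_of_lt hs.2)]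
    have h1 : HasDerivAt (fun s:ℝ => s^(-α)) (-α * t^(-α-1)) t :=
      Real.hasDerivAt_rpow_const (Or.inl ht.ne')
    have h2 : HasDerivAt (fun s:ℝ => s^(-2*β)) ((-2*β) * t^(-2*β-1)) t :=
      Real.hasDerivAt_rpow_const (Or.inl ht.ne')
    have h3 : HasDerivAt (fun s:ℝ => C - k * (dualNorm H x)^2 * s^(-2*β))
        (-(k * (dualNorm H x)^2 * ((-2*β) * t^(-2*β-1)))) t := by
      simpa using (h2.const_mul (k * (dualNorm H x)^2)).const_sub C
    have h4 : HasDerivAt (fun p:ℝ => p^(1/(m-1)))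
        ((1/(m-1)) * (C - k * (dualNorm H x)^2 * t^(-2*β))^(1/(m-1)-1))
        (C - k * (dualNorm H x)^2 * t^(-2*β)) :=
      Real.hasDerivAt_rpow_const (Or.inl hpos.ne')
    have h5 := h4.comp t h3
    have h6 := h1.mul h5
    have hDval : deriv (fun s => U x s) t
        = -α * t^(-α-1) * (C - k * (dualNorm H x)^2 * t^(-2*β))^(1/(m-1))
          + t^(-α) * ((1/(m-1)) * (C - k * (dualNorm H x)^2 * t^(-2*β))^(1/(m-1)-1)
            * -(k * (dualNorm H x)^2 * ((-2*β) * t^(-2*β-1)))) := by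
      rw [hW.deriv_eq]
      exact HasDerivAt.deriv h6
    rw [hDval, hRHS]
    rw [show C - (k * t^(-2*β)) * (dualNorm H x)^2
      = C - k * (dualNorm H x)^2 * t^(-2*β) by ring]
    have I1 : t^(-(α*m)) * t^(-2*β) = t^(-α-1) := by
      rw [← Real.rpow_add ht]; congr 1; linarith
    have I2 : t^(-(α*m)) * t^(-2*β) * t^(-2*β) = t^(-α) * t^(-2*β-1) := by
      rw [← Real.rpow_add ht, ← Real.rpow_add ht, ← Real.rpow_add ht]; congr 1; linarith
    linear_combination (2*(1/(m-1)+1)*k*(N:ℝ)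
        * (C - k * (dualNorm H x)^2 * t^(-2*β))^(1/(m-1))) * I1
      + (t^(-α-1) * (C - k * (dualNorm H x)^2 * t^(-2*β))^(1/(m-1))) * hC1'
      + (-(4*(1/(m-1)+1)*k^2*(1/(m-1))*(dualNorm H x)^2
        * (C - k * (dualNorm H x)^2 * t^(-2*β))^(1/(m-1)-1))) * I2
      + (-(2*(1/(m-1))*k*(dualNorm H x)^2*t^(-α)*t^(-2*β-1)
        * (C - k * (dualNorm H x)^2 * t^(-2*β))^(1/(m-1)-1))) * hC2'
end
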